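/- Let $\{Y^{(k)}_n\}$ and $\{Y^{(k+1)}_n\}$ be the stationary second-order Markov chains of the construction, differing only in transitions following the two-step history $(t_{k+1}, k+1)$. For any $N$ and $\delta>0$, if $t_{k+1}$ is chosen so large that the stationary probability of the state $t_{k+1}$ under $\{Y^{(k)}_n\}$ is less than $\delta/(64+2N)$, then the total variation distance between the laws of $(Y^{(k)}_0,\dots,Y^{(k)}_N)$ and $(Y^{(k+1)}_0,\dots,Y^{(k+1)}_N)$ is at most $\delta$. -/

import Mathlib

open MeasureTheory Filter Set
open scoped ENNReal

attribute [local instance] Classical.propDecidable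

namespace MemoryEst

variable {Ω : Type*} [MeasurableSpace Ω] {𝒳 : Type*} [MeasurableSpace 𝒳]

/-- The word `w` (read left to right) occupies positions `l - w.length + 1, …, l`. -/
def wordEndsAt (X : ℤ → Ω → 𝒳) (l : ℤ) (w : List 𝒳) (ω : Ω) : Prop :=
  ∀ j : Fin w.length, X (l - (w.length : ℤ) + 1 + ((j : ℕ) : ℤ)) ω = w.get j

def cyl (X : ℤ → Ω → 𝒳) (l : ℤ) (w : List 𝒳) : Set Ω := {ω | wordEndsAt X l w ω}

/-- `P(X_{-k+1}^0 = w)` where `k = w.length`. -/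
noncomputable def wordProb (μ : Measure Ω) (X : ℤ → Ω → 𝒳) (w : List 𝒳) : ℝ :=
  (μ (cyl X 0 w)).toReal

/-- `p(x | w) = P(X_1 = x | X_{-k+1}^0 = w)`. -/
noncomputable def condProb (μ : Measure Ω) (X : ℤ → Ω → 𝒳) (x : 𝒳) (w : List 𝒳) : ℝ :=
  (μ (cyl X 0 w ∩ {ω | X 1 ω = x})).toReal / wordProb μ X w

def IsStationary (μ : Measure Ω) (X : ℤ → Ω → 𝒳) : Prop :=
  ∀ (l : ℤ) (w : List 𝒳), μ (cyl X l w) = μ (cyl X 0 w)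

/-- `w` is a memory word: it has positive probability and the conditional law of the
next symbol does not change under any left extension of positive probability. -/
def IsMemoryWord (μ : Measure Ω) (X : ℤ → Ω → 𝒳) (w : List 𝒳) : Prop :=
  0 < wordProb μ X w ∧
    ∀ (z : List 𝒳) (y : 𝒳), z ≠ [] → 0 < wordProb μ X (z ++ w ++ [y]) →
      condProb μ X y w = condProb μ X y (z ++ w)

/-- The word `(X_{l-k+1}, …, X_l)`. -/
def pastWord (X : ℤ → Ω → 𝒳) (l : ℤ) (k : ℕ) (ω : Ω) : List 𝒳 :=
  (List.range k).map fun j => X (l - (k : ℤ) + 1 + (j : ℤ)) ω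

/-- `K(X_{-∞}^l)`: least `k` such that `X_{l-k+1}^l` is a memory word (`sInf ∅ = 0`). -/
noncomputable def memoryLenNat (μ : Measure Ω) (X : ℤ → Ω → 𝒳) (l : ℤ) (ω : Ω) : ℕ :=
  sInf {k : ℕ | IsMemoryWord μ X (pastWord X l k ω)}

def FinitarilyMarkovian (μ : Measure Ω) (X : ℤ → Ω → 𝒳) : Prop :=
  ∀ᵐ ω ∂μ, ∃ k : ℕ, IsMemoryWord μ X (pastWord X 0 k ω)

/-- Number of positions `l ∈ [a,b]` at which the word `w` ends. -/
noncomputable def countOcc (X : ℤ → Ω → 𝒳) (a b : ℤ) (w : List 𝒳) (ω : Ω) : ℕ :=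
  ((Finset.Icc a b).filter fun l => wordEndsAt X l w ω).card

/-- Empirical conditional probability `p̂_n(x|w)` from the data segment `X_{-n}^0`. -/
noncomputable def empP (X : ℤ → Ω → 𝒳) (n : ℕ) (x : 𝒳) (w : List 𝒳) (ω : Ω) : ℝ :=
  (countOcc X (-(n : ℤ) + w.length) 0 (w ++ [x]) ω : ℝ) /
    (countOcc X (-(n : ℤ) + w.length - 1) (-1) w ω : ℝ)

/-- `w ∈ 𝓛ⁿ_{w.length}`: the word `w` appears more than `n^{1-γ}` times in `X_{-n}^0`. -/
def memLong (γ : ℝ) (X : ℤ → Ω → 𝒳) (n : ℕ) (w : List 𝒳) (ω : Ω) : Prop :=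
  (n : ℝ) ^ (1 - γ) < (countOcc X (-(n : ℤ) + w.length - 1) 0 w ω : ℝ)

/-- Empirical discrepancy `Δ̂ⁿ_k(w)` (with `sSup ∅ = 0`). -/
noncomputable def empDelta (γ : ℝ) (X : ℤ → Ω → 𝒳) (n : ℕ) (w : List 𝒳) (ω : Ω) : ℝ :=
  sSup {d : ℝ | ∃ (z : List 𝒳) (x : 𝒳), 1 ≤ z.length ∧ z.length ≤ n ∧
    memLong γ X n (z ++ w ++ [x]) ω ∧
    d = |empP X n x w ω - empP X n x (z ++ w) ω|}

/-- The discrepancy `Δ_k(w)` measuring failure of `w` to be a memory word. -/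
noncomputable def Delta (μ : Measure Ω) (X : ℤ → Ω → 𝒳) (w : List 𝒳) : ℝ :=
  sSup {d : ℝ | ∃ (z : List 𝒳) (x : 𝒳), z ≠ [] ∧ 0 < wordProb μ X (z ++ w ++ [x]) ∧
    d = |condProb μ X x w - condProb μ X x (z ++ w)|}

def NTEST (γ β : ℝ) (X : ℤ → Ω → 𝒳) (n : ℕ) (w : List 𝒳) (ω : Ω) : Prop :=
  empDelta γ X n w ω ≤ (n : ℝ) ^ (-β)

/-- Forward recurrence times `λ⁺_{l,k,i}` of the word occupying `(l-k, l]`. -/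
noncomputable def lamPos (X : ℤ → Ω → 𝒳) (l : ℤ) (k : ℕ) (ω : Ω) : ℕ → ℕ
  | 0 => 0
  | i + 1 =>
    lamPos X l k ω i +
      sInf {t : ℕ | 0 < t ∧ ∀ j : Fin k,
        X (l + (lamPos X l k ω i : ℤ) + (t : ℤ) - ((j : ℕ) : ℤ)) ω =
          X (l + (lamPos X l k ω i : ℤ) - ((j : ℕ) : ℤ)) ω}

/-- Backward recurrence times `λ⁻_{l,k,i}` of the word occupying `(l-k, l]`. -/
noncomputable def lamNeg (X : ℤ → Ω → 𝒳) (l : ℤ) (k : ℕ) (ω : Ω) : ℕ → ℕ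
  | 0 => 0
  | i + 1 =>
    lamNeg X l k ω i +
      sInf {t : ℕ | 0 < t ∧ ∀ j : Fin k,
        X (l - (lamNeg X l k ω i : ℤ) - (t : ℤ) - ((j : ℕ) : ℤ)) ω =
          X (l - (lamNeg X l k ω i : ℤ) - ((j : ℕ) : ℤ)) ω}

/-- The left shift on two-sided path space. -/
def shift (𝒳 : Type*) : (ℤ → 𝒳) → (ℤ → 𝒳) := fun ω n => ω (n + 1)

/-- The canonical process on path space. -/
def proc (𝒳 : Type*) : ℤ → (ℤ → 𝒳) → 𝒳 := fun n ω => ω n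

/-- First order Markov property for the canonical process. -/
def MarkovOrderOne {S : Type*} [MeasurableSpace S] (μ : Measure (ℤ → S)) : Prop :=
  ∀ (w : List S) (a y : S), 0 < wordProb μ (proc S) (w ++ [a]) →
    condProb μ (proc S) y (w ++ [a]) = condProb μ (proc S) y [a]

/-- Markov chain of order `L`: every positive-probability word of length `L` is a memory word. -/
def MarkovOfOrder {S : Type*} [MeasurableSpace S] (μ : Measure (ℤ → S)) (L : ℕ) : Prop :=
  ∀ w : List S, w.length = L → 0 < wordProb μ (proc S) w → IsMemoryWord μ (proc S) w

/-- The forward recurrence times `ζ_n(i)` of the left-extension reconstruction scheme. -/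
noncomputable def zeta (X : ℤ → Ω → 𝒳) (i : ℕ) (ω : Ω) : ℕ → ℕ
  | 0 => 0
  | n + 1 =>
    zeta X i ω n +
      sInf {t : ℕ | 0 < t ∧ ∀ j : Fin (n + 1),
        X ((i : ℤ) + (zeta X i ω n : ℤ) - (n : ℤ) + ((j : ℕ) : ℤ) + (t : ℤ)) ω =
          X ((i : ℤ) + (zeta X i ω n : ℤ) - (n : ℤ) + ((j : ℕ) : ℤ)) ω}

/-- The reconstructed past `X̃_{-n}(i)`. -/
noncomputable def tildeX (X : ℤ → Ω → 𝒳) (i : ℕ) (n : ℕ) (ω : Ω) : 𝒳 :=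
  X ((i : ℤ) + (zeta X i ω n : ℤ) - (n : ℤ)) ω

/-- The backward recurrence times `ζ̂ᵏ_i`. -/
noncomputable def hatZeta (X : ℤ → Ω → 𝒳) (k : ℕ) (ω : Ω) : ℕ → ℤ
  | 0 => 0
  | i + 1 =>
    hatZeta X k ω i -
      sInf {t : ℕ | 0 < t ∧ ∀ j : Fin (k - i),
        X (hatZeta X k ω i - ((k - i - 1 : ℕ) : ℤ) + ((j : ℕ) : ℤ) - (t : ℤ)) ω =
          X (hatZeta X k ω i - ((k - i - 1 : ℕ) : ℤ) + ((j : ℕ) : ℤ)) ω}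

/-- The transition matrix of the chain `Z` on the nonnegative integers. -/
noncomputable def Ptrans (s j : ℕ) : ℝ :=
  if s < j then (2 : ℝ) ^ (-((j : ℤ) - (s : ℤ)) - 1)
  else if j = s then (2 : ℝ) ^ (-(s : ℤ) - 1)
  else (2 : ℝ) ^ (-(j : ℤ) - 2)

/-- The backward memory-length estimator `χ_n`. -/
noncomputable def chiEst (γ β : ℝ) (X : ℤ → Ω → 𝒳) (n : ℕ) (ω : Ω) : ℕ :=
  if ∃ k, k < n ∧ NTEST γ β X n (pastWord X 0 k ω) ω then
    sInf {k : ℕ | k < n ∧ NTEST γ β X n (pastWord X 0 k ω) ω}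
  else n


-- ################ Section A ################

lemma mem_cyl_iff (l : ℤ) (w : List ℕ) (ω : ℤ → ℕ) :
    ω ∈ cyl (proc ℕ) l w ↔
      ∀ (i : ℕ) (h : i < w.length), ω (l - (w.length : ℤ) + 1 + (i : ℤ)) = w[i] := by
  constructor
  · intro hh i h; exact hh ⟨i, h⟩
  · intro hh j; exact hh j j.isLt

lemma measurableSet_cyl (l : ℤ) (w : List ℕ) : MeasurableSet (cyl (proc ℕ) l w) := by
  have : cyl (proc ℕ) l w =
      ⋂ j : Fin w.length,
        (fun ω : ℤ → ℕ => ω (l - (w.length : ℤ) + 1 + ((j : ℕ) : ℤ))) ⁻¹' {w.get j} := by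
    ext ω; simp only [Set.mem_iInter, Set.mem_preimage, Set.mem_singleton_iff]; rfl
  rw [this]
  exact MeasurableSet.iInter fun j => (measurable_pi_apply _) (measurableSet_singleton _)

lemma shift_preimage_cyl (l : ℤ) (w : List ℕ) :
    shift ℕ ⁻¹' cyl (proc ℕ) l w = cyl (proc ℕ) (l + 1) w := by
  ext ω
  simp only [Set.mem_preimage, mem_cyl_iff, shift, proc]
  constructor
  · intro h i hi; have := h i hi; rw [← this]; congr 1; ring
  · intro h i hi; have := h i hi; rw [← this]; congr 1; ring

lemma stat (μ : Measure (ℤ → ℕ)) (h : MeasurePreserving (shift ℕ) μ μ) (l : ℤ) (w : List ℕ) :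
    μ (cyl (proc ℕ) l w) = μ (cyl (proc ℕ) 0 w) := by
  induction l using Int.induction_on with
  | zero => rfl
  | succ n ih =>
      rw [← ih, ← shift_preimage_cyl, h.measure_preimage (measurableSet_cyl _ _).nullMeasurableSet]
  | pred n ih =>
      rw [← ih]
      have h2 : (-(n : ℤ) - 1 + 1) = -(n : ℤ) := by ring
      rw [← h2, ← shift_preimage_cyl,
        h.measure_preimage (measurableSet_cyl _ _).nullMeasurableSet, h2]

-- right extension: cyl l (w ++ [y]) = cyl (l-1) w ∩ {ω l = y}
lemma cyl_concat (l : ℤ) (w : List ℕ) (y : ℕ) :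
    cyl (proc ℕ) l (w ++ [y]) = cyl (proc ℕ) (l - 1) w ∩ {ω : ℤ → ℕ | ω l = y} := by
  ext ω
  simp only [mem_cyl_iff, Set.mem_inter_iff, Set.mem_setOf_eq]
  constructor
  · intro h
    refine ⟨fun i hi => ?_, ?_⟩
    · have := h i (by simp; omega)
      rw [List.getElem_append_left hi] at this
      rw [← this]; congr 1; simp only [List.length_append, List.length_singleton]; push_cast; ring
    · have := h w.length (by simp)
      rw [List.getElem_concat_length] at this
      rw [← this]
      · congr 1; simp only [List.length_append, List.length_singleton]; push_cast; ring
      · rfl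
  · rintro ⟨h1, h2⟩ i hi
    simp only [List.length_append, List.length_singleton] at hi
    rcases Nat.lt_or_ge i w.length with hlt | hge
    · rw [List.getElem_append_left hlt, ← h1 i hlt]
      congr 1; simp only [List.length_append, List.length_singleton]; push_cast; ring
    · have hiw : i = w.length := by omega
      subst hiw
      rw [List.getElem_concat_length, ← h2]
      · congr 1; simp only [List.length_append, List.length_singleton]; push_cast; ring
      · rfl

-- left extension: cyl l (a :: w) = cyl l w ∩ {ω (l - w.length) = a}
lemma cyl_cons (l : ℤ) (a : ℕ) (w : List ℕ) :
    cyl (proc ℕ) l (a :: w) = cyl (proc ℕ) l w ∩ {ω : ℤ → ℕ | ω (l - (w.length : ℤ)) = a} := by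
  ext ω
  simp only [mem_cyl_iff, Set.mem_inter_iff, Set.mem_setOf_eq]
  constructor
  · intro h
    refine ⟨fun i hi => ?_, ?_⟩
    · have := h (i + 1) (by simp; omega)
      rw [List.getElem_cons_succ] at this
      rw [← this]; congr 1; simp only [List.length_cons]; push_cast; ring
    · have := h 0 (by simp)
      rw [List.getElem_cons_zero] at this
      rw [← this]; congr 1; simp only [List.length_cons]; push_cast; ring
  · rintro ⟨h1, h2⟩ i hi
    cases i with
    | zero =>
        rw [List.getElem_cons_zero, ← h2]
        congr 1; simp only [List.length_cons]; push_cast; ring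
    | succ n =>
        rw [List.getElem_cons_succ]
        have hn : n < w.length := by simp only [List.length_cons] at hi; omega
        rw [← h1 n hn]; congr 1; simp only [List.length_cons]; push_cast; ring

lemma cyl_nil (l : ℤ) : cyl (proc ℕ) l ([] : List ℕ) = Set.univ := by
  ext ω; simp [mem_cyl_iff]

lemma cyl_singleton (l : ℤ) (a : ℕ) :
    cyl (proc ℕ) l [a] = {ω : ℤ → ℕ | ω l = a} := by
  have := cyl_concat l [] a
  rw [cyl_nil, Set.univ_inter] at this
  simpa using this

-- countable decomposition at a coordinate
lemma measure_eq_tsum_inter (μ : Measure (ℤ → ℕ)) (S : Set (ℤ → ℕ)) (hS : MeasurableSet S)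
    (i : ℤ) : μ S = ∑' a : ℕ, μ (S ∩ {ω : ℤ → ℕ | ω i = a}) := by
  have hcoord : ∀ a : ℕ, MeasurableSet {ω : ℤ → ℕ | ω i = a} := by
    intro a
    have : {ω : ℤ → ℕ | ω i = a} = (fun ω : ℤ → ℕ => ω i) ⁻¹' {a} := rfl
    rw [this]; exact (measurable_pi_apply i) (measurableSet_singleton a)
  have hmeas : ∀ a : ℕ, MeasurableSet (S ∩ {ω : ℤ → ℕ | ω i = a}) := fun a =>
    hS.inter (hcoord a)
  have hdis : Pairwise (Function.onFun Disjoint fun a : ℕ => S ∩ {ω : ℤ → ℕ | ω i = a}) := by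
    intro a b hab
    refine Set.disjoint_left.mpr ?_
    rintro ω ⟨-, h1⟩ ⟨-, h2⟩
    exact hab (h1.symm.trans h2)
  have hun : (⋃ a : ℕ, S ∩ {ω : ℤ → ℕ | ω i = a}) = S := by
    ext ω; simp
  rw [← measure_iUnion hdis hmeas, hun]


-- ################ Section B: kernel rows ################

lemma two_zpow_pos (n : ℤ) : (0:ℝ) < (2:ℝ) ^ n := by positivity

lemma two_zpow_mono {m n : ℤ} (h : m ≤ n) : (2:ℝ) ^ m ≤ (2:ℝ) ^ n := by
  exact zpow_le_zpow_right₀ one_le_two h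

lemma two_zpow_eq (u : ℕ) (c : ℤ) : (2:ℝ) ^ (-(u:ℤ) + c) = (2:ℝ) ^ c * (1/2:ℝ) ^ u := by
  rw [zpow_add₀ (by norm_num : (2:ℝ) ≠ 0), mul_comm]
  congr 1
  rw [zpow_neg, zpow_natCast, ← inv_pow, one_div]

lemma Ptrans_pos (s j : ℕ) : 0 < Ptrans s j := by
  unfold Ptrans; split_ifs <;> exact two_zpow_pos _

lemma Ptrans_le_half (s j : ℕ) : Ptrans s j ≤ 1/2 := by
  have h2 : ((2:ℝ)^(-1:ℤ)) = 1/2 := by norm_num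
  unfold Ptrans
  split_ifs with h1 h3
  · calc (2:ℝ) ^ (-((j : ℤ) - (s : ℤ)) - 1) ≤ (2:ℝ)^(-1:ℤ) := two_zpow_mono (by omega)
      _ = 1/2 := h2
  · calc (2:ℝ) ^ (-(s : ℤ) - 1) ≤ (2:ℝ)^(-1:ℤ) := two_zpow_mono (by omega)
      _ = 1/2 := h2
  · calc (2:ℝ) ^ (-(j : ℤ) - 2) ≤ (2:ℝ)^(-1:ℤ) := two_zpow_mono (by omega)
      _ = 1/2 := h2

lemma Ptrans_zero_ge (b : ℕ) : 1/4 ≤ Ptrans b 0 := by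
  unfold Ptrans
  split_ifs with h1 h2
  · omega
  · have : b = 0 := h2.symm
    subst this; norm_num
  · norm_num

lemma summable_Ptrans (b : ℕ) : Summable (fun u => Ptrans b u) := by
  rw [← summable_nat_add_iff (b+1)]
  have heq : (fun u => Ptrans b (u + (b+1))) = fun u => (1/4 : ℝ) * (1/2)^u * (1/2)^b * 2^b := by
    funext u
    have h : b < u + (b+1) := by omega
    rw [Ptrans, if_pos h]
    have he : (-(((u + (b+1) : ℕ) : ℤ) - (b:ℤ)) - 1) = (-(u:ℤ) + (-2)) := by push_cast; ring
    rw [he, two_zpow_eq]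
    have : ((2:ℝ)^(-2:ℤ)) = 1/4 := by norm_num
    rw [this]
    have hb : ((1:ℝ)/2)^b * 2^b = 1 := by
      rw [one_div, ← mul_pow]; norm_num
    rw [mul_assoc, mul_assoc]
    rw [mul_comm ((1/2:ℝ)^u)]
    rw [← mul_assoc, ← mul_assoc]
    rw [mul_assoc ((1/4:ℝ))]
    rw [hb]
    ring
  rw [heq]
  apply Summable.mul_right
  apply Summable.mul_right
  exact (summable_geometric_of_lt_one (by norm_num) (by norm_num)).mul_left _

lemma hasSum_Ptrans (b : ℕ) : HasSum (fun u => Ptrans b u) 1 := by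
  refine (Summable.hasSum_iff (summable_Ptrans b)).mpr ?_
  have hsum := (summable_Ptrans b)
  rw [← Summable.sum_add_tsum_nat_add (b+1) hsum]
  have htail : ∑' (u : ℕ), Ptrans b (u + (b+1)) = 1/2 := by
    have heq : ∀ u : ℕ, Ptrans b (u + (b+1)) = (1/4 : ℝ) * (1/2)^u := by
      intro u
      have h : b < u + (b+1) := by omega
      rw [Ptrans, if_pos h]
      have he : (-(((u + (b+1) : ℕ) : ℤ) - (b:ℤ)) - 1) = (-(u:ℤ) + (-2)) := by push_cast; ring
      rw [he, two_zpow_eq]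
      norm_num
    rw [tsum_congr heq, tsum_mul_left, tsum_geometric_of_lt_one (by norm_num) (by norm_num)]
    norm_num
  rw [htail]
  have hfin : ∑ u ∈ Finset.range (b+1), Ptrans b u = 1/2 := by
    rw [Finset.sum_range_succ]
    have hlast : Ptrans b b = (1/2:ℝ) * (1/2)^b := by
      rw [Ptrans, if_neg (by omega), if_pos rfl]
      have he : (-(b:ℤ) - 1) = (-(b:ℤ) + (-1)) := by ring
      rw [he, two_zpow_eq]; norm_num
    have hbefore : ∀ u ∈ Finset.range b, Ptrans b u = (1/4:ℝ) * (1/2)^u := by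
      intro u hu
      rw [Finset.mem_range] at hu
      rw [Ptrans, if_neg (by omega), if_neg (by omega)]
      have he : (-(u:ℤ) - 2) = (-(u:ℤ) + (-2)) := by ring
      rw [he, two_zpow_eq]; norm_num
    rw [Finset.sum_congr rfl hbefore, ← Finset.mul_sum, hlast]
    rw [geom_sum_eq (by norm_num : (1/2:ℝ) ≠ 1)]
    field_simp
    ring
  rw [hfin]
  norm_num

-- swapped row
noncomputable def rowSwapX (b u : ℕ) : ℝ :=
  if u = b then Ptrans b (b+1) else if u = b+1 then Ptrans b b else Ptrans b u

lemma rowSwapX_eq_comp (b : ℕ) :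
    (fun u => rowSwapX b u) = (fun u => Ptrans b u) ∘ (Equiv.swap b (b+1)) := by
  funext u
  simp only [Function.comp_apply, rowSwapX]
  split_ifs with h1 h2
  · subst h1; rw [Equiv.swap_apply_left]
  · subst h2; rw [Equiv.swap_apply_right]
  · rw [Equiv.swap_apply_of_ne_of_ne h1 h2]

lemma hasSum_rowSwapX (b : ℕ) : HasSum (fun u => rowSwapX b u) 1 := by
  rw [rowSwapX_eq_comp]
  exact (Equiv.hasSum_iff (Equiv.swap b (b+1))).mpr (hasSum_Ptrans b)


-- ################ Section C: factorization ################

section Fact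

variable (μ : Measure (ℤ → ℕ)) [IsProbabilityMeasure μ]

lemma cyl_ne_top (l : ℤ) (w : List ℕ) : μ (cyl (proc ℕ) l w) ≠ ⊤ :=
  (measure_lt_top μ _).ne

lemma wp_nonneg (w : List ℕ) : 0 ≤ wordProb μ (proc ℕ) w := ENNReal.toReal_nonneg

-- suffix monotonicity
lemma wp_mono (z w : List ℕ) : wordProb μ (proc ℕ) (z ++ w) ≤ wordProb μ (proc ℕ) w := by
  unfold wordProb
  apply ENNReal.toReal_mono (cyl_ne_top μ 0 w)
  apply measure_mono
  induction z with
  | nil => simp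
  | cons a z ih =>
      rw [List.cons_append, cyl_cons]
      exact le_trans Set.inter_subset_left ih

-- sum rule on the right
lemma wp_sum_right (hstat : MeasurePreserving (shift ℕ) μ μ) (w : List ℕ) :
    HasSum (fun y => wordProb μ (proc ℕ) (w ++ [y])) (wordProb μ (proc ℕ) w) := by
  have hdec := measure_eq_tsum_inter μ (cyl (proc ℕ) 0 w) (measurableSet_cyl 0 w) 1
  have hterm : ∀ y : ℕ,
      μ (cyl (proc ℕ) 0 w ∩ {ω : ℤ → ℕ | ω 1 = y}) = μ (cyl (proc ℕ) 0 (w ++ [y])) := by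
    intro y
    rw [← stat μ hstat 1 (w ++ [y]), cyl_concat]
    norm_num
  rw [tsum_congr hterm] at hdec
  have hne : ∀ y : ℕ, μ (cyl (proc ℕ) 0 (w ++ [y])) ≠ ⊤ := fun y => cyl_ne_top μ _ _
  have hsum : (∑' y : ℕ, μ (cyl (proc ℕ) 0 (w ++ [y]))) ≠ ⊤ := by
    rw [← hdec]; exact cyl_ne_top μ _ _
  have hsummable : Summable (fun y => wordProb μ (proc ℕ) (w ++ [y])) :=
    ENNReal.summable_toReal hsum
  refine (Summable.hasSum_iff hsummable).mpr ?_
  unfold wordProb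
  rw [← ENNReal.tsum_toReal_eq hne, ← hdec]

-- sum rule on the left
lemma wp_sum_left (w : List ℕ) :
    HasSum (fun a => wordProb μ (proc ℕ) (a :: w)) (wordProb μ (proc ℕ) w) := by
  have hdec := measure_eq_tsum_inter μ (cyl (proc ℕ) 0 w) (measurableSet_cyl 0 w)
    (0 - (w.length : ℤ))
  have hterm : ∀ a : ℕ,
      μ (cyl (proc ℕ) 0 w ∩ {ω : ℤ → ℕ | ω (0 - (w.length : ℤ)) = a}) =
        μ (cyl (proc ℕ) 0 (a :: w)) := by
    intro a; rw [cyl_cons]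
  rw [tsum_congr hterm] at hdec
  have hne : ∀ a : ℕ, μ (cyl (proc ℕ) 0 (a :: w)) ≠ ⊤ := fun a => cyl_ne_top μ _ _
  have hsum : (∑' a : ℕ, μ (cyl (proc ℕ) 0 (a :: w))) ≠ ⊤ := by
    rw [← hdec]; exact cyl_ne_top μ _ _
  refine (Summable.hasSum_iff (ENNReal.summable_toReal hsum)).mpr ?_
  unfold wordProb
  rw [← ENNReal.tsum_toReal_eq hne, ← hdec]

-- conditional probability as a ratio
lemma condProb_ratio (hstat : MeasurePreserving (shift ℕ) μ μ) (w : List ℕ) (y : ℕ) :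
    condProb μ (proc ℕ) y w = wordProb μ (proc ℕ) (w ++ [y]) / wordProb μ (proc ℕ) w := by
  unfold condProb
  congr 1
  have h1 : (cyl (proc ℕ) 0 w ∩ {ω : ℤ → ℕ | proc ℕ 1 ω = y}) = cyl (proc ℕ) 1 (w ++ [y]) := by
    rw [cyl_concat]; norm_num; rfl
  rw [h1]
  unfold wordProb
  rw [stat μ hstat 1 (w ++ [y])]

lemma wp_concat_le (hstat : MeasurePreserving (shift ℕ) μ μ) (w : List ℕ) (y : ℕ) :
    wordProb μ (proc ℕ) (w ++ [y]) ≤ wordProb μ (proc ℕ) w := by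
  unfold wordProb
  apply ENNReal.toReal_mono (cyl_ne_top μ 0 w)
  rw [cyl_concat]
  calc μ (cyl (proc ℕ) (0-1) w ∩ {ω : ℤ → ℕ | ω 0 = y}) ≤ μ (cyl (proc ℕ) (0-1) w) :=
        measure_mono Set.inter_subset_left
    _ = μ (cyl (proc ℕ) 0 w) := stat μ hstat (0-1) w

-- main factorization
lemma fact_main (hstat : MeasurePreserving (shift ℕ) μ μ) (hmk : MarkovOfOrder μ 2)
    (K : ℕ → ℕ → ℕ → ℝ)
    (htr : ∀ a b u : ℕ, 0 < wordProb μ (proc ℕ) [a, b] →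
      condProb μ (proc ℕ) u [a, b] = K a b u)
    (hKpos : ∀ a b u, 0 < K a b u) (hKsum : ∀ a b, HasSum (K a b) 1)
    (z : List ℕ) (a b y : ℕ) :
    wordProb μ (proc ℕ) ((z ++ [a, b]) ++ [y]) =
      wordProb μ (proc ℕ) (z ++ [a, b]) * K a b y := by
  set w := z ++ [a, b] with hw
  rcases eq_or_lt_of_le (wp_nonneg μ w) with hw0 | hwpos
  · have h1 : wordProb μ (proc ℕ) (w ++ [y]) = 0 :=
      le_antisymm (le_trans (wp_concat_le μ hstat w y) hw0.symm.le) (wp_nonneg μ _)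
    rw [h1, ← hw0]; ring
  · have hpair : 0 < wordProb μ (proc ℕ) [a, b] := lt_of_lt_of_le hwpos (wp_mono μ z [a, b])
    have hmem : IsMemoryWord μ (proc ℕ) [a, b] := hmk [a, b] rfl hpair
    have key : ∀ u : ℕ, 0 < wordProb μ (proc ℕ) (w ++ [u]) →
        wordProb μ (proc ℕ) (w ++ [u]) = wordProb μ (proc ℕ) w * K a b u := by
      intro u hu
      have hcp : condProb μ (proc ℕ) u w
          = wordProb μ (proc ℕ) (w ++ [u]) / wordProb μ (proc ℕ) w :=
        condProb_ratio μ hstat w u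
      have hck : condProb μ (proc ℕ) u w = K a b u := by
        rcases eq_or_ne z [] with hz | hz
        · rw [hw, hz, List.nil_append]; exact htr a b u hpair
        · have heq := hmem.2 z u hz (by exact hu)
          rw [hw, ← heq]
          exact htr a b u hpair
      rw [hck] at hcp
      rw [eq_div_iff (ne_of_gt hwpos)] at hcp
      linarith
    -- the nonnegative gap function
    set g : ℕ → ℝ := fun u => wordProb μ (proc ℕ) w * K a b u - wordProb μ (proc ℕ) (w ++ [u])
      with hg
    have hgnn : ∀ u, 0 ≤ g u := by
      intro u
      have hgu : g u = wordProb μ (proc ℕ) w * K a b u - wordProb μ (proc ℕ) (w ++ [u]) := rfl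
      rcases eq_or_lt_of_le (wp_nonneg μ (w ++ [u])) with h0 | hpos
      · rw [hgu, ← h0, sub_zero]
        exact le_of_lt (mul_pos hwpos (hKpos a b u))
      · rw [hgu, key u hpos, sub_self]
    have hgsum : HasSum g 0 := by
      have h1 : HasSum (fun u => wordProb μ (proc ℕ) w * K a b u)
          (wordProb μ (proc ℕ) w * 1) := (hKsum a b).mul_left _
      have h2 := wp_sum_right μ hstat w
      have := h1.sub h2
      simpa using this
    have hgzero : ∀ u, g u = 0 := fun u =>
      le_antisymm (le_hasSum hgsum u fun v _ => hgnn v) (hgnn u)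
    have hfin := hgzero y
    have hgy : g y = wordProb μ (proc ℕ) w * K a b y - wordProb μ (proc ℕ) (w ++ [y]) := rfl
    rw [hgy] at hfin
    linarith

end Fact


-- ################ Section D: ENNReal transfer operator ################

noncomputable def TEop (K : ℕ → ℕ → ℕ → ℝ≥0∞) (g : ℕ × ℕ → ℝ≥0∞) : ℕ × ℕ → ℝ≥0∞ :=
  fun p => ∑' a, g (a, p.1) * K a p.1 p.2

noncomputable def dE (u v : ℕ × ℕ → ℝ≥0∞) : ℝ≥0∞ :=
  ∑' p : ℕ × ℕ, ((u p - v p) + (v p - u p))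

section DE

-- pointwise triangle for tsub distance
lemma tsub_dist_triangle (a b c : ℝ≥0∞) :
    ((a - c) + (c - a)) ≤ ((a - b) + (b - a)) + ((b - c) + (c - b)) := by
  have h1 : a - c ≤ (a - b) + (b - c) := by
    rw [tsub_le_iff_right]
    calc a ≤ (a - b) + b := le_tsub_add
      _ ≤ (a - b) + ((b - c) + c) := by gcongr; exact le_tsub_add
      _ = (a - b) + (b - c) + c := by ring
  have h2 : c - a ≤ (c - b) + (b - a) := by
    rw [tsub_le_iff_right]
    calc c ≤ (c - b) + b := le_tsub_add
      _ ≤ (c - b) + ((b - a) + a) := by gcongr; exact le_tsub_add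
      _ = (c - b) + (b - a) + a := by ring
  calc ((a - c) + (c - a)) ≤ ((a - b) + (b - c)) + ((c - b) + (b - a)) := add_le_add h1 h2
    _ = ((a - b) + (b - a)) + ((b - c) + (c - b)) := by ring

lemma dE_triangle (u v w : ℕ × ℕ → ℝ≥0∞) : dE u w ≤ dE u v + dE v w := by
  unfold dE
  rw [← ENNReal.tsum_add]
  exact ENNReal.tsum_le_tsum fun p => tsub_dist_triangle (u p) (v p) (w p)

lemma dE_le_mass (u v : ℕ × ℕ → ℝ≥0∞) : dE u v ≤ (∑' p, u p) + ∑' p, v p := by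
  unfold dE
  rw [← ENNReal.tsum_add]
  exact ENNReal.tsum_le_tsum fun p => add_le_add tsub_le_self tsub_le_self

lemma add_tsub_add_right_en (a b : ℝ≥0∞) {c : ℝ≥0∞} (hc : c ≠ ⊤) :
    (a + c) - (b + c) = a - b := by
  rcases le_total a b with h | h
  · rw [tsub_eq_zero_of_le h, tsub_eq_zero_of_le (add_le_add_left h c)]
  · rcases eq_or_ne b ⊤ with hb | hb
    · have ha : a = ⊤ := by rw [hb] at h; exact top_le_iff.mp h
      rw [ha, hb]; simp
    · refine ENNReal.sub_eq_of_eq_add (by simp [hb, hc]) ?_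
      rw [← add_assoc, tsub_add_cancel_of_le h]

lemma dE_add_cancel (u v w : ℕ × ℕ → ℝ≥0∞) (hw : ∀ p, w p ≠ ⊤) :
    dE (fun p => u p + w p) (fun p => v p + w p) = dE u v := by
  unfold dE
  congr 1; funext p
  rw [add_tsub_add_right_en (u p) (v p) (hw p), add_tsub_add_right_en (v p) (u p) (hw p)]

-- operator basics
lemma TEop_mono (K : ℕ → ℕ → ℕ → ℝ≥0∞) {u v : ℕ × ℕ → ℝ≥0∞} (h : ∀ p, u p ≤ v p) (p : ℕ × ℕ) :
    TEop K u p ≤ TEop K v p :=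
  ENNReal.tsum_le_tsum fun a => mul_le_mul_left (h _) _

lemma TEop_add (K : ℕ → ℕ → ℕ → ℝ≥0∞) (u v : ℕ × ℕ → ℝ≥0∞) (p : ℕ × ℕ) :
    TEop K (fun q => u q + v q) p = TEop K u p + TEop K v p := by
  unfold TEop
  rw [← ENNReal.tsum_add]
  congr 1; funext a; rw [add_mul]

lemma TEop_mass (K : ℕ → ℕ → ℕ → ℝ≥0∞) (hrow : ∀ a b, ∑' u, K a b u = 1)
    (g : ℕ × ℕ → ℝ≥0∞) : ∑' p, TEop K g p = ∑' p, g p := by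
  unfold TEop
  rw [ENNReal.tsum_prod']
  have h1 : ∀ b : ℕ, ∑' (c : ℕ) (a : ℕ), g (a, b) * K a b c = ∑' (a : ℕ), g (a, b) := by
    intro b
    rw [ENNReal.tsum_comm]
    congr 1; funext a
    rw [ENNReal.tsum_mul_left, hrow a b, mul_one]
  calc ∑' (b : ℕ) (c : ℕ) (a : ℕ), g (a, b) * K a b c = ∑' (b : ℕ) (a : ℕ), g (a, b) := by
        congr 1; funext b; exact h1 b
    _ = ∑' (a : ℕ) (b : ℕ), g (a, b) := ENNReal.tsum_comm
    _ = ∑' p : ℕ × ℕ, g p := (ENNReal.tsum_prod').symm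

lemma TEop_one_minor (K : ℕ → ℕ → ℕ → ℝ≥0∞) (hmin : ∀ a b, (1 : ℝ≥0∞) ≤ 4 * K a b 0)
    (g : ℕ × ℕ → ℝ≥0∞) (b : ℕ) : (∑' a, g (a, b)) ≤ 4 * TEop K g (b, 0) := by
  unfold TEop
  calc (∑' a, g (a, b)) = ∑' a, g (a, b) * 1 := by simp
    _ ≤ ∑' a, g (a, b) * (4 * K a b 0) :=
        ENNReal.tsum_le_tsum fun a => mul_le_mul_right (hmin a b) _
    _ = 4 * ∑' a, g (a, b) * K a b 0 := by
        rw [← ENNReal.tsum_mul_left]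
        congr 1; funext a; ring

lemma TEop_minor2 (K : ℕ → ℕ → ℕ → ℝ≥0∞) (hmin : ∀ a b, (1 : ℝ≥0∞) ≤ 4 * K a b 0)
    (g : ℕ × ℕ → ℝ≥0∞) : (∑' p, g p) ≤ 16 * TEop K (TEop K g) (0, 0) := by
  have h1 : (∑' p, g p) = ∑' (b : ℕ) (a : ℕ), g (a, b) := by
    rw [ENNReal.tsum_prod']; exact ENNReal.tsum_comm
  calc (∑' p, g p) = ∑' (b : ℕ) (a : ℕ), g (a, b) := h1
    _ ≤ ∑' (b : ℕ), 4 * TEop K g (b, 0) :=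
        ENNReal.tsum_le_tsum fun b => TEop_one_minor K hmin g b
    _ = 4 * ∑' (b : ℕ), TEop K g (b, 0) := ENNReal.tsum_mul_left
    _ ≤ 4 * (4 * TEop K (TEop K g) (0, 0)) := by
        gcongr
        exact TEop_one_minor K hmin (TEop K g) 0
    _ = 16 * TEop K (TEop K g) (0, 0) := by rw [← mul_assoc]; norm_num

lemma dE_TE (K : ℕ → ℕ → ℕ → ℝ≥0∞) (hrow : ∀ a b, ∑' u, K a b u = 1)
    (u v : ℕ × ℕ → ℝ≥0∞) : dE (TEop K u) (TEop K v) ≤ dE u v := by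
  have hpt : ∀ p, (TEop K u p - TEop K v p) + (TEop K v p - TEop K u p)
      ≤ TEop K (fun q => (u q - v q) + (v q - u q)) p := by
    intro p
    rw [TEop_add]
    apply add_le_add
    · rw [tsub_le_iff_right]
      calc TEop K u p ≤ TEop K (fun q => (u q - v q) + v q) p :=
            TEop_mono K (fun q => le_tsub_add) p
        _ = TEop K (fun q => u q - v q) p + TEop K v p := TEop_add K _ _ p
    · rw [tsub_le_iff_right]
      calc TEop K v p ≤ TEop K (fun q => (v q - u q) + u q) p :=
            TEop_mono K (fun q => le_tsub_add) p
        _ = TEop K (fun q => v q - u q) p + TEop K u p := TEop_add K _ _ p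
  calc dE (TEop K u) (TEop K v)
      ≤ ∑' p, TEop K (fun q => (u q - v q) + (v q - u q)) p := ENNReal.tsum_le_tsum hpt
    _ = ∑' p, ((u p - v p) + (v p - u p)) := TEop_mass K hrow _
    _ = dE u v := rfl

lemma en_add_right_cancel {a b c : ℝ≥0∞} (hc : c ≠ ⊤) (h : a + c = b + c) : a = b := by
  have h1 : a + c - c = b + c - c := by rw [h]
  rwa [ENNReal.add_sub_cancel_right hc, ENNReal.add_sub_cancel_right hc] at h1

lemma dE_TE2 (K : ℕ → ℕ → ℕ → ℝ≥0∞) (hrow : ∀ a b, ∑' u, K a b u = 1)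
    (hmin : ∀ a b, (1 : ℝ≥0∞) ≤ 4 * K a b 0)
    (u v : ℕ × ℕ → ℝ≥0∞) (hm : ∑' p, u p = ∑' p, v p) (hfin : ∑' p, u p ≠ ⊤) :
    16 * dE (TEop K (TEop K u)) (TEop K (TEop K v)) ≤ 15 * dE u v := by
  set m : ℕ × ℕ → ℝ≥0∞ := fun p => u p ⊓ v p with hmdef
  set u' : ℕ × ℕ → ℝ≥0∞ := fun p => u p - m p with hudef
  set v' : ℕ × ℕ → ℝ≥0∞ := fun p => v p - m p with hvdef
  have hmle : ∀ p, m p ≤ u p := fun p => inf_le_left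
  have hmlev : ∀ p, m p ≤ v p := fun p => inf_le_right
  have hmfin : ∀ p, m p ≠ ⊤ := fun p =>
    ne_top_of_le_ne_top hfin (le_trans (hmle p) (ENNReal.le_tsum p))
  have hu : ∀ p, u' p + m p = u p := fun p => tsub_add_cancel_of_le (hmle p)
  have hv : ∀ p, v' p + m p = v p := fun p => tsub_add_cancel_of_le (hmlev p)
  have hdisj : ∀ p, u' p = 0 ∨ v' p = 0 := by
    intro p
    rcases le_total (u p) (v p) with h | h
    · left
      have : m p = u p := inf_eq_left.mpr h
      rw [hudef]; simp only; rw [this]; exact tsub_self _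
    · right
      have : m p = v p := inf_eq_right.mpr h
      rw [hvdef]; simp only; rw [this]; exact tsub_self _
  have hmassu : ∑' p, u' p + ∑' p, m p = ∑' p, u p := by
    rw [← ENNReal.tsum_add]; congr 1; funext p; exact hu p
  have hmassv : ∑' p, v' p + ∑' p, m p = ∑' p, v p := by
    rw [← ENNReal.tsum_add]; congr 1; funext p; exact hv p
  have hmmassfin : ∑' p, m p ≠ ⊤ :=
    ne_top_of_le_ne_top hfin (ENNReal.tsum_le_tsum hmle)
  have hseq : ∑' p, u' p = ∑' p, v' p := by
    refine en_add_right_cancel hmmassfin ?_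
    rw [hmassu, hmassv, hm]
  set s : ℝ≥0∞ := ∑' p, u' p with hsdef
  have hsfin : s ≠ ⊤ := by
    refine ne_top_of_le_ne_top hfin ?_
    rw [← hmassu]; exact le_self_add
  have hdisj_dist : ∀ p, (u' p - v' p) + (v' p - u' p) = u' p + v' p := by
    intro p
    rcases hdisj p with h | h
    · rw [h]; simp [zero_tsub]
    · rw [h]; simp [zero_tsub]
  have hdEuv : dE u v = s + s := by
    have h1 : dE u v = dE u' v' := by
      have e1 : dE u' v' = dE (fun p => u' p + m p) (fun p => v' p + m p) :=
        (dE_add_cancel u' v' m hmfin).symm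
      rw [e1]
      unfold dE
      congr 1; funext p; rw [← hu p, ← hv p]
    rw [h1]
    unfold dE
    calc ∑' p, ((u' p - v' p) + (v' p - u' p)) = ∑' p, (u' p + v' p) := by
          congr 1; funext p; exact hdisj_dist p
      _ = (∑' p, u' p) + ∑' p, v' p := ENNReal.tsum_add
      _ = s + s := by rw [← hsdef, ← hseq]
  -- decompose the two-step images
  have hufun : u = fun p => u' p + m p := by funext p; rw [hu p]
  have hvfun : v = fun p => v' p + m p := by funext p; rw [hv p]
  have hTEdecomp : ∀ w w' : ℕ × ℕ → ℝ≥0∞, w = (fun p => w' p + m p) →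
      TEop K (TEop K w) = fun p => TEop K (TEop K w') p + TEop K (TEop K m) p := by
    intro w w' hw
    have e1 : TEop K w = fun q => TEop K w' q + TEop K m q := by
      funext q; rw [hw]; exact TEop_add K w' m q
    funext p
    rw [e1]
    exact TEop_add K _ _ p
  have hTEmfin : ∀ p, TEop K (TEop K m) p ≠ ⊤ := by
    intro p
    have h1 : TEop K (TEop K m) p ≤ ∑' q, TEop K (TEop K m) q := ENNReal.le_tsum p
    rw [TEop_mass K hrow, TEop_mass K hrow] at h1
    exact ne_top_of_le_ne_top hmmassfin h1
  have hdist2 : dE (TEop K (TEop K u)) (TEop K (TEop K v))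
      = dE (TEop K (TEop K u')) (TEop K (TEop K v')) := by
    rw [hTEdecomp u u' hufun, hTEdecomp v v' hvfun]
    exact dE_add_cancel _ _ _ hTEmfin
  set g : ℕ × ℕ → ℝ≥0∞ := TEop K (TEop K u') with hgdef
  set h : ℕ × ℕ → ℝ≥0∞ := TEop K (TEop K v') with hhdef
  have hgm : ∑' p, g p = s := by
    rw [hgdef, TEop_mass K hrow, TEop_mass K hrow]
  have hhm : ∑' p, h p = s := by
    rw [hhdef, TEop_mass K hrow, TEop_mass K hrow, ← hseq]
  have hptid : ∀ p, ((g p - h p) + (h p - g p)) + (g p ⊓ h p) + (g p ⊓ h p) = g p + h p := by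
    intro p
    rcases le_total (g p) (h p) with hle | hle
    · rw [tsub_eq_zero_of_le hle, inf_eq_left.mpr hle, zero_add, add_assoc,
        add_comm (g p) (g p), ← add_assoc, tsub_add_cancel_of_le hle, add_comm]
    · rw [tsub_eq_zero_of_le hle, inf_eq_right.mpr hle, add_zero, add_assoc,
        add_comm (h p) (h p), ← add_assoc, tsub_add_cancel_of_le hle]
  have dEdef : dE g h = ∑' p, ((g p - h p) + (h p - g p)) := rfl
  have e1 : ∀ p : ℕ × ℕ, ((g p - h p) + (h p - g p)) + ((g p ⊓ h p) + (g p ⊓ h p)) = g p + h p := by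
    intro p; rw [← add_assoc]; exact hptid p
  have hid : dE g h + ((∑' p, (g p ⊓ h p)) + (∑' p, (g p ⊓ h p))) = s + s := by
    have A : ∑' p, (((g p - h p) + (h p - g p)) + ((g p ⊓ h p) + (g p ⊓ h p)))
        = (∑' p, ((g p - h p) + (h p - g p))) + ∑' p, ((g p ⊓ h p) + (g p ⊓ h p)) :=
      ENNReal.tsum_add
    have B : ∑' p, ((g p ⊓ h p) + (g p ⊓ h p))
        = (∑' p, (g p ⊓ h p)) + (∑' p, (g p ⊓ h p)) := ENNReal.tsum_add
    have C : ∑' p, (((g p - h p) + (h p - g p)) + ((g p ⊓ h p) + (g p ⊓ h p)))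
        = ∑' p, (g p + h p) := tsum_congr e1
    have D : ∑' p, (g p + h p) = (∑' p, g p) + (∑' p, h p) := ENNReal.tsum_add
    rw [dEdef, ← B, ← A, C, D, hgm, hhm]
  have hsg : s ≤ 16 * g (0, 0) := by
    rw [hsdef, hgdef]; exact TEop_minor2 K hmin u'
  have hsh : s ≤ 16 * h (0, 0) := by
    rw [hseq, hhdef]; exact TEop_minor2 K hmin v'
  have hsmin : s ≤ 16 * ∑' p, (g p ⊓ h p) := by
    have h1 : s ≤ 16 * (g (0,0) ⊓ h (0,0)) := by
      rcases le_total (g (0,0)) (h (0,0)) with hle | hle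
      · rwa [inf_eq_left.mpr hle]
      · rwa [inf_eq_right.mpr hle]
    refine le_trans h1 ?_
    gcongr
    exact ENNReal.le_tsum (0, 0)
  have hkey : 16 * dE g h + (s + s) ≤ 30 * s + (s + s) := by
    calc 16 * dE g h + (s + s)
        ≤ 16 * dE g h + (16 * (∑' p, (g p ⊓ h p)) + 16 * (∑' p, (g p ⊓ h p))) :=
          add_le_add_right (add_le_add hsmin hsmin) _
      _ = 16 * (dE g h + ((∑' p, (g p ⊓ h p)) + (∑' p, (g p ⊓ h p)))) := by ring
      _ = 16 * (s + s) := by rw [hid]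
      _ = 30 * s + (s + s) := by ring
  have hss : (s + s) ≠ ⊤ := ENNReal.add_ne_top.mpr ⟨hsfin, hsfin⟩
  have h16 : 16 * dE g h ≤ 30 * s := (ENNReal.add_le_add_iff_right hss).mp hkey
  rw [hdist2, hdEuv]
  calc 16 * dE g h ≤ 30 * s := h16
    _ = 15 * (s + s) := by ring

lemma en_tsum_sub_le {ι : Type*} {f g : ι → ℝ≥0∞} :
    (∑' a, f a) - (∑' a, g a) ≤ ∑' a, (f a - g a) := by
  rw [tsub_le_iff_right, ← ENNReal.tsum_add]
  exact ENNReal.tsum_le_tsum fun a => le_tsub_add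

lemma en_mul_sub_le {a b c : ℝ≥0∞} : a * b - a * c ≤ a * (b - c) := by
  rw [tsub_le_iff_right, ← mul_add]
  exact mul_le_mul_right le_tsub_add a

lemma dE_perturb (Kmu Knu : ℕ → ℕ → ℕ → ℝ≥0∞) (star : ℕ × ℕ)
    (hagree : ∀ a b, (a, b) ≠ star → ∀ c, Kmu a b c = Knu a b c)
    (hdiff : (∑' c, ((Kmu star.1 star.2 c - Knu star.1 star.2 c) +
      (Knu star.1 star.2 c - Kmu star.1 star.2 c))) ≤ 1)
    (π : ℕ × ℕ → ℝ≥0∞) :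
    dE (TEop Kmu π) (TEop Knu π) ≤ π star := by
  set rd : ℕ → ℕ → ℕ → ℝ≥0∞ :=
    fun a b c => (Kmu a b c - Knu a b c) + (Knu a b c - Kmu a b c) with hrd
  have hpt : ∀ p : ℕ × ℕ, (TEop Kmu π p - TEop Knu π p) + (TEop Knu π p - TEop Kmu π p)
      ≤ ∑' a, π (a, p.1) * rd a p.1 p.2 := by
    intro p
    have h1 : TEop Kmu π p - TEop Knu π p
        ≤ ∑' a, π (a, p.1) * (Kmu a p.1 p.2 - Knu a p.1 p.2) := by
      refine le_trans en_tsum_sub_le (ENNReal.tsum_le_tsum fun a => en_mul_sub_le)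
    have h2 : TEop Knu π p - TEop Kmu π p
        ≤ ∑' a, π (a, p.1) * (Knu a p.1 p.2 - Kmu a p.1 p.2) := by
      refine le_trans en_tsum_sub_le (ENNReal.tsum_le_tsum fun a => en_mul_sub_le)
    calc (TEop Kmu π p - TEop Knu π p) + (TEop Knu π p - TEop Kmu π p)
        ≤ (∑' a, π (a, p.1) * (Kmu a p.1 p.2 - Knu a p.1 p.2)) +
          ∑' a, π (a, p.1) * (Knu a p.1 p.2 - Kmu a p.1 p.2) := add_le_add h1 h2
      _ = ∑' a, (π (a, p.1) * (Kmu a p.1 p.2 - Knu a p.1 p.2) +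
          π (a, p.1) * (Knu a p.1 p.2 - Kmu a p.1 p.2)) := ENNReal.tsum_add.symm
      _ = ∑' a, π (a, p.1) * rd a p.1 p.2 := by
          congr 1; funext a; rw [hrd]; simp only; rw [mul_add]
  have hfub : (∑' p : ℕ × ℕ, ∑' a, π (a, p.1) * rd a p.1 p.2)
      = ∑' (a : ℕ) (b : ℕ), π (a, b) * ∑' c, rd a b c := by
    rw [ENNReal.tsum_prod']
    calc ∑' (b : ℕ) (c : ℕ) (a : ℕ), π (a, b) * rd a b c
        = ∑' (b : ℕ) (a : ℕ) (c : ℕ), π (a, b) * rd a b c := by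
          congr 1; funext b; exact ENNReal.tsum_comm
      _ = ∑' (a : ℕ) (b : ℕ) (c : ℕ), π (a, b) * rd a b c := ENNReal.tsum_comm
      _ = ∑' (a : ℕ) (b : ℕ), π (a, b) * ∑' c, rd a b c := by
          congr 1; funext a; congr 1; funext b; exact ENNReal.tsum_mul_left
  have hsingle : (∑' (a : ℕ) (b : ℕ), π (a, b) * ∑' c, rd a b c) ≤ π star := by
    have h0 : ∀ q : ℕ × ℕ, q ≠ star → π q * (∑' c, rd q.1 q.2 c) = 0 := by
      intro q hq
      have hz : ∀ c, rd q.1 q.2 c = 0 := by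
        intro c
        have he := hagree q.1 q.2 (by simpa using hq) c
        rw [hrd]; simp only [he, tsub_self, add_zero]
      rw [tsum_congr hz]
      simp
    calc (∑' (a : ℕ) (b : ℕ), π (a, b) * ∑' c, rd a b c)
        = ∑' q : ℕ × ℕ, π q * ∑' c, rd q.1 q.2 c :=
          (ENNReal.tsum_prod' (f := fun q : ℕ × ℕ => π q * ∑' c, rd q.1 q.2 c)).symm
      _ = π star * ∑' c, rd star.1 star.2 c := tsum_eq_single star h0
      _ ≤ π star * 1 := mul_le_mul_right hdiff _
      _ = π star := by rw [mul_one]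
  calc dE (TEop Kmu π) (TEop Knu π)
      ≤ ∑' p : ℕ × ℕ, ∑' a, π (a, p.1) * rd a p.1 p.2 := ENNReal.tsum_le_tsum hpt
    _ = ∑' (a : ℕ) (b : ℕ), π (a, b) * ∑' c, rd a b c := hfub
    _ ≤ π star := hsingle

lemma pair_bound (Kmu Knu : ℕ → ℕ → ℕ → ℝ≥0∞)
    (hrowNu : ∀ a b, ∑' u, Knu a b u = 1)
    (hminNu : ∀ a b, (1 : ℝ≥0∞) ≤ 4 * Knu a b 0)
    (star : ℕ × ℕ)
    (hagree : ∀ a b, (a, b) ≠ star → ∀ c, Kmu a b c = Knu a b c)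
    (hdiff : (∑' c, ((Kmu star.1 star.2 c - Knu star.1 star.2 c) +
      (Knu star.1 star.2 c - Kmu star.1 star.2 c))) ≤ 1)
    (π₁ π₂ : ℕ × ℕ → ℝ≥0∞)
    (h1 : TEop Kmu π₁ = π₁) (h2 : TEop Knu π₂ = π₂)
    (hm1 : ∑' p, π₁ p = 1) (hm2 : ∑' p, π₂ p = 1) :
    dE π₁ π₂ ≤ 32 * π₁ star := by
  set A1 : ℕ × ℕ → ℝ≥0∞ := TEop Knu π₁ with hA1
  set A2 : ℕ × ℕ → ℝ≥0∞ := TEop Knu A1 with hA2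
  have e1 : dE π₁ A1 ≤ π₁ star := by
    have := dE_perturb Kmu Knu star hagree hdiff π₁
    rwa [h1] at this
  have e2 : dE A1 A2 ≤ dE π₁ A1 := by
    have := dE_TE Knu hrowNu π₁ A1
    rwa [← hA1, ← hA2] at this
  have e3 : 16 * dE A2 π₂ ≤ 15 * dE π₁ π₂ := by
    have := dE_TE2 Knu hrowNu hminNu π₁ π₂ (by rw [hm1, hm2]) (by rw [hm1]; simp)
    rwa [h2, h2, ← hA1, ← hA2] at this
  have tri : dE π₁ π₂ ≤ dE π₁ A1 + (dE A1 A2 + dE A2 π₂) := by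
    calc dE π₁ π₂ ≤ dE π₁ A1 + dE A1 π₂ := dE_triangle _ _ _
      _ ≤ dE π₁ A1 + (dE A1 A2 + dE A2 π₂) := add_le_add_right (dE_triangle _ _ _) _
  have hdfin : dE π₁ π₂ ≠ ⊤ := by
    refine ne_top_of_le_ne_top ?_ (dE_le_mass π₁ π₂)
    rw [hm1, hm2]
    simp
  have hmain : 16 * dE π₁ π₂ ≤ 32 * π₁ star + 15 * dE π₁ π₂ := by
    calc 16 * dE π₁ π₂ ≤ 16 * (dE π₁ A1 + (dE A1 A2 + dE A2 π₂)) := by gcongr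
      _ = 16 * dE π₁ A1 + 16 * dE A1 A2 + 16 * dE A2 π₂ := by ring
      _ ≤ 16 * π₁ star + 16 * π₁ star + 15 * dE π₁ π₂ := by
          refine add_le_add (add_le_add ?_ ?_) e3
          · gcongr
          · gcongr
            exact le_trans e2 e1
      _ = 32 * π₁ star + 15 * dE π₁ π₂ := by ring
  have h15 : (15 : ℝ≥0∞) * dE π₁ π₂ ≠ ⊤ := by
    refine ENNReal.mul_ne_top (by simp) hdfin
  have hfinal : dE π₁ π₂ + 15 * dE π₁ π₂ ≤ 32 * π₁ star + 15 * dE π₁ π₂ := by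
    calc dE π₁ π₂ + 15 * dE π₁ π₂ = 16 * dE π₁ π₂ := by ring
      _ ≤ 32 * π₁ star + 15 * dE π₁ π₂ := hmain
  exact (ENNReal.add_le_add_iff_right h15).mp hfinal

end DE



-- ################ Section E: kernels, ENNReal bridge ################

noncomputable def KgenX (S : ℕ → ℕ → Prop) (a b u : ℕ) : ℝ :=
  if S a b then rowSwapX b u else Ptrans b u

lemma rowSwapX_pos (b u : ℕ) : 0 < rowSwapX b u := by
  unfold rowSwapX; split_ifs <;> exact Ptrans_pos _ _

lemma rowSwapX_le_half (b u : ℕ) : rowSwapX b u ≤ 1/2 := by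
  unfold rowSwapX; split_ifs <;> exact Ptrans_le_half _ _

lemma rowSwapX_zero_ge (b : ℕ) : 1/4 ≤ rowSwapX b 0 := by
  unfold rowSwapX
  by_cases h1 : (0 : ℕ) = b
  · rw [if_pos h1, ← h1]
    have he : Ptrans 0 (0 + 1) = (2:ℝ) ^ (-2 : ℤ) := by
      unfold Ptrans
      rw [if_pos (by omega : (0:ℕ) < 0 + 1)]
      norm_num
    rw [he]
    norm_num
  · rw [if_neg h1, if_neg (by omega : ¬(0:ℕ) = b + 1)]
    exact Ptrans_zero_ge b

lemma KgenX_pos (S : ℕ → ℕ → Prop) (a b u : ℕ) : 0 < KgenX S a b u := by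
  unfold KgenX; split_ifs
  · exact rowSwapX_pos b u
  · exact Ptrans_pos b u

lemma KgenX_zero_ge (S : ℕ → ℕ → Prop) (a b : ℕ) : 1/4 ≤ KgenX S a b 0 := by
  unfold KgenX; split_ifs
  · exact rowSwapX_zero_ge b
  · exact Ptrans_zero_ge b

lemma hasSum_KgenX (S : ℕ → ℕ → Prop) (a b : ℕ) : HasSum (KgenX S a b) 1 := by
  unfold KgenX
  split_ifs
  · exact hasSum_rowSwapX b
  · exact hasSum_Ptrans b

noncomputable def KEgen (S : ℕ → ℕ → Prop) (a b u : ℕ) : ℝ≥0∞ :=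
  ENNReal.ofReal (KgenX S a b u)

lemma KEgen_row (S : ℕ → ℕ → Prop) (a b : ℕ) : ∑' u, KEgen S a b u = 1 := by
  have hs : Summable (KgenX S a b) := (hasSum_KgenX S a b).summable
  have ht : ∑' u, KgenX S a b u = 1 := (hasSum_KgenX S a b).tsum_eq
  unfold KEgen
  rw [← ENNReal.ofReal_tsum_of_nonneg (fun u => (KgenX_pos S a b u).le) hs, ht]
  simp

lemma KEgen_min (S : ℕ → ℕ → Prop) (a b : ℕ) : (1 : ℝ≥0∞) ≤ 4 * KEgen S a b 0 := by
  unfold KEgen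
  calc (1 : ℝ≥0∞) = ENNReal.ofReal ((4 : ℝ) * (1/4)) := by norm_num
    _ ≤ ENNReal.ofReal ((4 : ℝ) * KgenX S a b 0) := by
        apply ENNReal.ofReal_le_ofReal
        nlinarith [KgenX_zero_ge S a b]
    _ = ENNReal.ofReal (4 : ℝ) * ENNReal.ofReal (KgenX S a b 0) :=
        ENNReal.ofReal_mul (by norm_num)
    _ = 4 * ENNReal.ofReal (KgenX S a b 0) := by norm_num

lemma KEgen_agree {S1 S2 : ℕ → ℕ → Prop} {a b : ℕ} (h : S1 a b ↔ S2 a b) (u : ℕ) :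
    KEgen S1 a b u = KEgen S2 a b u := by
  unfold KEgen KgenX
  by_cases hs : S1 a b
  · rw [if_pos hs, if_pos (h.mp hs)]
  · rw [if_neg hs, if_neg (fun hh => hs (h.mpr hh))]

lemma KEgen_diff {S1 S2 : ℕ → ℕ → Prop} {a b : ℕ} :
    (∑' c, ((KEgen S1 a b c - KEgen S2 a b c) + (KEgen S2 a b c - KEgen S1 a b c))) ≤ 1 := by
  set f : ℕ → ℝ≥0∞ :=
    fun c => (KEgen S1 a b c - KEgen S2 a b c) + (KEgen S2 a b c - KEgen S1 a b c) with hf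
  have hpt : ∀ c, f c = ENNReal.ofReal |KgenX S1 a b c - KgenX S2 a b c| := by
    intro c
    rw [hf]; simp only
    unfold KEgen
    rw [← ENNReal.ofReal_sub _ (KgenX_pos S2 a b c).le,
      ← ENNReal.ofReal_sub _ (KgenX_pos S1 a b c).le]
    rcases le_total (KgenX S1 a b c) (KgenX S2 a b c) with h | h
    · rw [ENNReal.ofReal_of_nonpos
          (show KgenX S1 a b c - KgenX S2 a b c ≤ 0 by linarith), zero_add, abs_sub_comm,
        abs_of_nonneg (by linarith)]
    · rw [ENNReal.ofReal_of_nonpos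
          (show KgenX S2 a b c - KgenX S1 a b c ≤ 0 by linarith), add_zero,
        abs_of_nonneg (by linarith)]
  have hzero : ∀ c ∉ ({b, b + 1} : Finset ℕ), f c = 0 := by
    intro c hc
    simp only [Finset.mem_insert, Finset.mem_singleton] at hc
    push_neg at hc
    rw [hpt c]
    have : KgenX S1 a b c = KgenX S2 a b c := by
      unfold KgenX rowSwapX
      split_ifs <;> first | rfl | omega
    rw [this]
    simp
  have hhalf : ∀ c, f c ≤ ENNReal.ofReal (1/2) := by
    intro c
    rw [hpt c]
    apply ENNReal.ofReal_le_ofReal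
    have h1 := KgenX_pos S1 a b c
    have h2 := KgenX_pos S2 a b c
    have h3 : KgenX S1 a b c ≤ 1/2 := by
      unfold KgenX; split_ifs
      · exact rowSwapX_le_half b c
      · exact Ptrans_le_half b c
    have h4 : KgenX S2 a b c ≤ 1/2 := by
      unfold KgenX; split_ifs
      · exact rowSwapX_le_half b c
      · exact Ptrans_le_half b c
    rw [abs_le]
    constructor <;> linarith
  have hcard : (({b, b + 1} : Finset ℕ).card : ℝ≥0∞) ≤ 2 := by
    have h1 : ({b, b + 1} : Finset ℕ).card ≤ 2 :=
      le_trans (Finset.card_insert_le b {b + 1}) (by simp)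
    exact_mod_cast h1
  calc (∑' c, f c) = ∑ c ∈ ({b, b + 1} : Finset ℕ), f c := tsum_eq_sum hzero
    _ ≤ ∑ _c ∈ ({b, b + 1} : Finset ℕ), ENNReal.ofReal (1/2) :=
        Finset.sum_le_sum fun c _ => hhalf c
    _ = (({b, b + 1} : Finset ℕ).card : ℝ≥0∞) * ENNReal.ofReal (1/2) := by
        rw [Finset.sum_const, nsmul_eq_mul]
    _ ≤ 2 * ENNReal.ofReal (1/2) := by gcongr
    _ = ENNReal.ofReal 2 * ENNReal.ofReal (1/2) := by
        congr 1
        simp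
    _ = ENNReal.ofReal (2 * (1/2)) := (ENNReal.ofReal_mul (by norm_num)).symm
    _ = 1 := by norm_num


-- ################ Section F: measure-side ENNReal lemmas ################

lemma ofFn_snoc' {n : ℕ} (v : Fin n → ℕ) (a : ℕ) :
    List.ofFn (Fin.snoc v a) = List.ofFn v ++ [a] := by
  rw [List.ofFn_succ' (Fin.snoc v a), List.concat_eq_append]
  congr 1
  · congr 1; funext i; simp
  · rw [Fin.snoc_last]

def reE (j : ℕ) : (((Fin j → ℕ) × ℕ × ℕ) × ℕ) ≃ ((Fin (j + 1) → ℕ) × ℕ × ℕ) where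
  toFun x := (Fin.snoc x.1.1 x.1.2.1, x.1.2.2, x.2)
  invFun y := ((Fin.init y.1, y.1 (Fin.last j), y.2.1), y.2.2)
  left_inv := by
    rintro ⟨⟨v, a, b⟩, y⟩
    simp [Fin.init_snoc, Fin.snoc_last]
  right_inv := by
    rintro ⟨w, b, y⟩
    simp [Fin.snoc_init_self]

section Blocks

variable (μ : Measure (ℤ → ℕ)) [IsProbabilityMeasure μ]

lemma enn_sum_left (w : List ℕ) :
    μ (cyl (proc ℕ) 0 w) = ∑' a, μ (cyl (proc ℕ) 0 (a :: w)) := by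
  have hdec := measure_eq_tsum_inter μ (cyl (proc ℕ) 0 w) (measurableSet_cyl 0 w)
    (0 - (w.length : ℤ))
  rw [hdec]
  congr 1; funext a; rw [cyl_cons]

lemma enn_sum_right (hstat : MeasurePreserving (shift ℕ) μ μ) (w : List ℕ) :
    μ (cyl (proc ℕ) 0 w) = ∑' y, μ (cyl (proc ℕ) 0 (w ++ [y])) := by
  have hdec := measure_eq_tsum_inter μ (cyl (proc ℕ) 0 w) (measurableSet_cyl 0 w) 1
  rw [hdec]
  congr 1; funext y
  rw [← stat μ hstat 1 (w ++ [y]), cyl_concat]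
  norm_num

lemma enn_fact (hstat : MeasurePreserving (shift ℕ) μ μ) (hmk : MarkovOfOrder μ 2)
    (S : ℕ → ℕ → Prop)
    (htr : ∀ a b u : ℕ, 0 < wordProb μ (proc ℕ) [a, b] →
      condProb μ (proc ℕ) u [a, b] = KgenX S a b u)
    (z : List ℕ) (a b y : ℕ) :
    μ (cyl (proc ℕ) 0 ((z ++ [a, b]) ++ [y]))
      = μ (cyl (proc ℕ) 0 (z ++ [a, b])) * KEgen S a b y := by
  have hreal := fact_main μ hstat hmk (KgenX S) htr (KgenX_pos S)
    (fun a b => hasSum_KgenX S a b) z a b y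
  unfold wordProb at hreal
  have h1 : μ (cyl (proc ℕ) 0 ((z ++ [a, b]) ++ [y])) ≠ ⊤ := cyl_ne_top μ _ _
  have h2 : μ (cyl (proc ℕ) 0 (z ++ [a, b])) ≠ ⊤ := cyl_ne_top μ _ _
  calc μ (cyl (proc ℕ) 0 ((z ++ [a, b]) ++ [y]))
      = ENNReal.ofReal ((μ (cyl (proc ℕ) 0 ((z ++ [a, b]) ++ [y]))).toReal) :=
        (ENNReal.ofReal_toReal h1).symm
    _ = ENNReal.ofReal ((μ (cyl (proc ℕ) 0 (z ++ [a, b]))).toReal * KgenX S a b y) := by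
        rw [hreal]
    _ = ENNReal.ofReal ((μ (cyl (proc ℕ) 0 (z ++ [a, b]))).toReal) *
          ENNReal.ofReal (KgenX S a b y) := ENNReal.ofReal_mul ENNReal.toReal_nonneg
    _ = μ (cyl (proc ℕ) 0 (z ++ [a, b])) * KEgen S a b y := by
        rw [ENNReal.ofReal_toReal h2]; rfl

noncomputable def piE (μ : Measure (ℤ → ℕ)) : ℕ × ℕ → ℝ≥0∞ :=
  fun p => μ (cyl (proc ℕ) 0 [p.1, p.2])

lemma piE_mass (hstat : MeasurePreserving (shift ℕ) μ μ) : ∑' p, piE μ p = 1 := by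
  unfold piE
  rw [ENNReal.tsum_prod']
  have hinner : ∀ a : ℕ, ∑' b, μ (cyl (proc ℕ) 0 [a, b]) = μ (cyl (proc ℕ) 0 [a]) := by
    intro a
    rw [enn_sum_right μ hstat [a]]
    rfl
  calc (∑' (a : ℕ) (b : ℕ), μ (cyl (proc ℕ) 0 [a, b]))
      = ∑' (a : ℕ), μ (cyl (proc ℕ) 0 [a]) := by congr 1; funext a; exact hinner a
    _ = μ (cyl (proc ℕ) 0 []) := (enn_sum_left μ []).symm
    _ = 1 := by rw [cyl_nil]; exact measure_univ

lemma piE_stat (hstat : MeasurePreserving (shift ℕ) μ μ) (hmk : MarkovOfOrder μ 2)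
    (S : ℕ → ℕ → Prop)
    (htr : ∀ a b u : ℕ, 0 < wordProb μ (proc ℕ) [a, b] →
      condProb μ (proc ℕ) u [a, b] = KgenX S a b u) :
    TEop (KEgen S) (piE μ) = piE μ := by
  funext p
  obtain ⟨b, c⟩ := p
  unfold TEop piE
  simp only
  have h1 : ∀ a : ℕ, μ (cyl (proc ℕ) 0 [a, b]) * KEgen S a b c
      = μ (cyl (proc ℕ) 0 [a, b, c]) := by
    intro a
    have := enn_fact μ hstat hmk S htr [] a b c
    simp only [List.nil_append] at this
    rw [← this]
    congr 1
  calc (∑' a, μ (cyl (proc ℕ) 0 [a, b]) * KEgen S a b c)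
      = ∑' a, μ (cyl (proc ℕ) 0 [a, b, c]) := by congr 1; funext a; exact h1 a
    _ = μ (cyl (proc ℕ) 0 [b, c]) := (enn_sum_left μ [b, c]).symm

lemma piE_small (hstat : MeasurePreserving (shift ℕ) μ μ) (a0 b0 : ℕ) :
    piE μ (a0, b0) ≤ μ {ω : ℤ → ℕ | ω 0 = a0} := by
  unfold piE
  calc μ (cyl (proc ℕ) 0 [a0, b0])
      ≤ μ {ω : ℤ → ℕ | ω (0 - (1 : ℕ)) = a0} := by
        apply measure_mono
        rw [show [a0, b0] = a0 :: [b0] from rfl, cyl_cons]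
        exact Set.inter_subset_right
    _ = μ (cyl (proc ℕ) (0 - (1 : ℕ)) [a0]) := by rw [cyl_singleton]
    _ = μ (cyl (proc ℕ) 0 [a0]) := stat μ hstat _ _
    _ = μ {ω : ℤ → ℕ | ω 0 = a0} := by rw [cyl_singleton]

lemma prefix_sum (u : List ℕ) :
    ∀ j : ℕ, (∑' v : Fin j → ℕ, μ (cyl (proc ℕ) 0 (List.ofFn v ++ u)))
      = μ (cyl (proc ℕ) 0 u) := by
  intro j
  induction j with
  | zero =>
      haveI : Unique (Fin 0 → ℕ) :=
        ⟨⟨fun i => i.elim0⟩, fun v => funext fun i => i.elim0⟩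
      rw [tsum_eq_single (default : Fin 0 → ℕ)
        (fun v hv => absurd (Subsingleton.elim v default) hv)]
      rw [List.ofFn_zero, List.nil_append]
  | succ j ih =>
      set e := (Fin.consEquiv (fun _ : Fin (j + 1) => ℕ)) with he
      have key := Equiv.tsum_eq e (fun w => μ (cyl (proc ℕ) 0 (List.ofFn w ++ u)))
      rw [← key]
      have hword : ∀ (x : ℕ × (Fin j → ℕ)),
          List.ofFn (e x) ++ u = x.1 :: (List.ofFn x.2 ++ u) := by
        intro x
        have h1 : (e x : Fin (j + 1) → ℕ) = Fin.cons x.1 x.2 := rfl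
        rw [h1, List.ofFn_succ]
        simp
      calc (∑' x : ℕ × (Fin j → ℕ), μ (cyl (proc ℕ) 0 (List.ofFn (e x) ++ u)))
          = ∑' x : ℕ × (Fin j → ℕ), μ (cyl (proc ℕ) 0 (x.1 :: (List.ofFn x.2 ++ u))) := by
            congr 1; funext x; rw [hword x]
        _ = ∑' (a : ℕ) (v : Fin j → ℕ), μ (cyl (proc ℕ) 0 (a :: (List.ofFn v ++ u))) :=
            ENNReal.tsum_prod'
        _ = ∑' (v : Fin j → ℕ) (a : ℕ), μ (cyl (proc ℕ) 0 (a :: (List.ofFn v ++ u))) :=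
            ENNReal.tsum_comm
        _ = ∑' (v : Fin j → ℕ), μ (cyl (proc ℕ) 0 (List.ofFn v ++ u)) := by
            congr 1; funext v; exact (enn_sum_left μ _).symm
        _ = μ (cyl (proc ℕ) 0 u) := ih

end Blocks


-- ################ Section G: block recursion ################

lemma dd_mul_le (x y α β : ℝ≥0∞) :
    ((x * α - y * β) + (y * β - x * α))
      ≤ ((x - y) + (y - x)) * β + x * ((α - β) + (β - α)) := by
  have h1 : x * α - y * β ≤ x * (α - β) + (x - y) * β := by
    rw [tsub_le_iff_right]
    calc x * α ≤ x * ((α - β) + β) := mul_le_mul_right le_tsub_add x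
      _ = x * (α - β) + x * β := mul_add x _ _
      _ ≤ x * (α - β) + ((x - y) + y) * β := by
          gcongr
          exact le_tsub_add
      _ = x * (α - β) + (x - y) * β + y * β := by rw [add_mul]; ring
  have h2 : y * β - x * α ≤ (y - x) * β + x * (β - α) := by
    rw [tsub_le_iff_right]
    calc y * β ≤ ((y - x) + x) * β := by gcongr; exact le_tsub_add
      _ = (y - x) * β + x * β := add_mul _ _ β
      _ ≤ (y - x) * β + x * ((β - α) + α) := by
          gcongr
          exact le_tsub_add
      _ = (y - x) * β + x * (β - α) + x * α := by rw [mul_add]; ring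
  calc (x * α - y * β) + (y * β - x * α)
      ≤ (x * (α - β) + (x - y) * β) + ((y - x) * β + x * (β - α)) := add_le_add h1 h2
    _ = ((x - y) + (y - x)) * β + x * ((α - β) + (β - α)) := by ring

noncomputable def Bsum (μ ν : Measure (ℤ → ℕ)) (j : ℕ) : ℝ≥0∞ :=
  ∑' x : (Fin j → ℕ) × ℕ × ℕ,
    ((μ (cyl (proc ℕ) 0 (List.ofFn x.1 ++ [x.2.1, x.2.2]))
        - ν (cyl (proc ℕ) 0 (List.ofFn x.1 ++ [x.2.1, x.2.2]))) +
      (ν (cyl (proc ℕ) 0 (List.ofFn x.1 ++ [x.2.1, x.2.2]))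
        - μ (cyl (proc ℕ) 0 (List.ofFn x.1 ++ [x.2.1, x.2.2]))))

lemma word_snoc (v : Fin j → ℕ) (a b y : ℕ) :
    List.ofFn (Fin.snoc v a) ++ [b, y] = (List.ofFn v ++ [a, b]) ++ [y] := by
  rw [ofFn_snoc']
  simp [List.append_assoc]

section BlockStep

variable (μ ν : Measure (ℤ → ℕ)) [IsProbabilityMeasure μ] [IsProbabilityMeasure ν]
variable (S1 S2 : ℕ → ℕ → Prop) (star : ℕ × ℕ)

lemma Bsum_step
    (hstatμ : MeasurePreserving (shift ℕ) μ μ) (hstatν : MeasurePreserving (shift ℕ) ν ν)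
    (hmkμ : MarkovOfOrder μ 2) (hmkν : MarkovOfOrder ν 2)
    (htrμ : ∀ a b u : ℕ, 0 < wordProb μ (proc ℕ) [a, b] →
      condProb μ (proc ℕ) u [a, b] = KgenX S1 a b u)
    (htrν : ∀ a b u : ℕ, 0 < wordProb ν (proc ℕ) [a, b] →
      condProb ν (proc ℕ) u [a, b] = KgenX S2 a b u)
    (hag : ∀ a b : ℕ, (a, b) ≠ star → (S1 a b ↔ S2 a b)) (j : ℕ) :
    Bsum μ ν (j + 1) ≤ Bsum μ ν j + piE μ star := by
  classical
  set P : List ℕ → ℝ≥0∞ := fun w => μ (cyl (proc ℕ) 0 w) with hP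
  set Q : List ℕ → ℝ≥0∞ := fun w => ν (cyl (proc ℕ) 0 w) with hQ
  set rd : ℕ → ℕ → ℕ → ℝ≥0∞ := fun a b y =>
    (KEgen S1 a b y - KEgen S2 a b y) + (KEgen S2 a b y - KEgen S1 a b y) with hrd
  set F : (Fin (j + 1) → ℕ) × ℕ × ℕ → ℝ≥0∞ := fun x =>
    (P (List.ofFn x.1 ++ [x.2.1, x.2.2]) - Q (List.ofFn x.1 ++ [x.2.1, x.2.2])) +
      (Q (List.ofFn x.1 ++ [x.2.1, x.2.2]) - P (List.ofFn x.1 ++ [x.2.1, x.2.2])) with hF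
  have hre : Bsum μ ν (j + 1) = ∑' z : ((Fin j → ℕ) × ℕ × ℕ) × ℕ, F (reE j z) :=
    (Equiv.tsum_eq (reE j) F).symm
  have hword : ∀ z : ((Fin j → ℕ) × ℕ × ℕ) × ℕ,
      List.ofFn ((reE j z).1) ++ [(reE j z).2.1, (reE j z).2.2]
        = (List.ofFn z.1.1 ++ [z.1.2.1, z.1.2.2]) ++ [z.2] := by
    rintro ⟨⟨v, a, b⟩, y⟩
    exact word_snoc v a b y
  have hptF : ∀ z : ((Fin j → ℕ) × ℕ × ℕ) × ℕ,
      F (reE j z) ≤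
        ((P (List.ofFn z.1.1 ++ [z.1.2.1, z.1.2.2]) - Q (List.ofFn z.1.1 ++ [z.1.2.1, z.1.2.2]))
          + (Q (List.ofFn z.1.1 ++ [z.1.2.1, z.1.2.2])
            - P (List.ofFn z.1.1 ++ [z.1.2.1, z.1.2.2]))) * KEgen S2 z.1.2.1 z.1.2.2 z.2
          + P (List.ofFn z.1.1 ++ [z.1.2.1, z.1.2.2]) * rd z.1.2.1 z.1.2.2 z.2 := by
    rintro ⟨⟨v, a, b⟩, y⟩
    have e1 : F (reE j ((v, a, b), y))
        = (P ((List.ofFn v ++ [a, b]) ++ [y]) - Q ((List.ofFn v ++ [a, b]) ++ [y])) +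
          (Q ((List.ofFn v ++ [a, b]) ++ [y]) - P ((List.ofFn v ++ [a, b]) ++ [y])) := by
      rw [hF]; simp only
      rw [hword ⟨⟨v, a, b⟩, y⟩]
    rw [e1]
    have e2 : P ((List.ofFn v ++ [a, b]) ++ [y]) = P (List.ofFn v ++ [a, b]) * KEgen S1 a b y :=
      enn_fact μ hstatμ hmkμ S1 htrμ (List.ofFn v) a b y
    have e3 : Q ((List.ofFn v ++ [a, b]) ++ [y]) = Q (List.ofFn v ++ [a, b]) * KEgen S2 a b y :=
      enn_fact ν hstatν hmkν S2 htrν (List.ofFn v) a b y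
    rw [e2, e3]
    exact dd_mul_le _ _ _ _
  have hinner : ∀ x : (Fin j → ℕ) × ℕ × ℕ,
      (∑' y : ℕ, (((P (List.ofFn x.1 ++ [x.2.1, x.2.2]) - Q (List.ofFn x.1 ++ [x.2.1, x.2.2]))
          + (Q (List.ofFn x.1 ++ [x.2.1, x.2.2]) - P (List.ofFn x.1 ++ [x.2.1, x.2.2])))
            * KEgen S2 x.2.1 x.2.2 y
          + P (List.ofFn x.1 ++ [x.2.1, x.2.2]) * rd x.2.1 x.2.2 y))
        = ((P (List.ofFn x.1 ++ [x.2.1, x.2.2]) - Q (List.ofFn x.1 ++ [x.2.1, x.2.2]))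
          + (Q (List.ofFn x.1 ++ [x.2.1, x.2.2]) - P (List.ofFn x.1 ++ [x.2.1, x.2.2])))
          + P (List.ofFn x.1 ++ [x.2.1, x.2.2]) * ∑' y, rd x.2.1 x.2.2 y := by
    intro x
    rw [ENNReal.tsum_add, ENNReal.tsum_mul_left, ENNReal.tsum_mul_left, KEgen_row, mul_one]
  have hrdsum : ∀ a b : ℕ, (∑' y, rd a b y) ≤ 1 := fun a b => KEgen_diff
  have hrdzero : ∀ a b : ℕ, (a, b) ≠ star → (∑' y, rd a b y) = 0 := by
    intro a b hab
    have : ∀ y, rd a b y = 0 := by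
      intro y
      rw [hrd]; simp only
      rw [KEgen_agree (hag a b hab) y]
      simp
    rw [tsum_congr this]; simp
  have htail : (∑' x : (Fin j → ℕ) × ℕ × ℕ,
      P (List.ofFn x.1 ++ [x.2.1, x.2.2]) * ∑' y, rd x.2.1 x.2.2 y) ≤ piE μ star := by
    have hpt : ∀ x : (Fin j → ℕ) × ℕ × ℕ,
        P (List.ofFn x.1 ++ [x.2.1, x.2.2]) * (∑' y, rd x.2.1 x.2.2 y)
          ≤ (if x.2 = star then P (List.ofFn x.1 ++ [star.1, star.2]) else 0) := by
      intro x
      by_cases hx : x.2 = star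
      · rw [if_pos hx]
        calc P (List.ofFn x.1 ++ [x.2.1, x.2.2]) * (∑' y, rd x.2.1 x.2.2 y)
            ≤ P (List.ofFn x.1 ++ [x.2.1, x.2.2]) * 1 :=
              mul_le_mul_right (hrdsum _ _) _
          _ = P (List.ofFn x.1 ++ [x.2.1, x.2.2]) := mul_one _
          _ = P (List.ofFn x.1 ++ [star.1, star.2]) := by rw [hx]
      · rw [if_neg hx, hrdzero x.2.1 x.2.2 (by simpa using hx), mul_zero]
    calc (∑' x : (Fin j → ℕ) × ℕ × ℕ,
          P (List.ofFn x.1 ++ [x.2.1, x.2.2]) * ∑' y, rd x.2.1 x.2.2 y)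
        ≤ ∑' x : (Fin j → ℕ) × ℕ × ℕ,
            (if x.2 = star then P (List.ofFn x.1 ++ [star.1, star.2]) else 0) :=
          ENNReal.tsum_le_tsum hpt
      _ = ∑' (v : Fin j → ℕ) (q : ℕ × ℕ),
            (if q = star then P (List.ofFn v ++ [star.1, star.2]) else 0) :=
          ENNReal.tsum_prod'
      _ = ∑' (v : Fin j → ℕ), P (List.ofFn v ++ [star.1, star.2]) := by
          congr 1; funext v
          rw [tsum_eq_single star fun q hq => if_neg hq]
          simp
      _ = piE μ star := by
          rw [hP]; simp only
          exact prefix_sum μ [star.1, star.2] j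
  calc Bsum μ ν (j + 1) = ∑' z : ((Fin j → ℕ) × ℕ × ℕ) × ℕ, F (reE j z) := hre
    _ ≤ ∑' z : ((Fin j → ℕ) × ℕ × ℕ) × ℕ,
        (((P (List.ofFn z.1.1 ++ [z.1.2.1, z.1.2.2]) - Q (List.ofFn z.1.1 ++ [z.1.2.1, z.1.2.2]))
          + (Q (List.ofFn z.1.1 ++ [z.1.2.1, z.1.2.2])
            - P (List.ofFn z.1.1 ++ [z.1.2.1, z.1.2.2]))) * KEgen S2 z.1.2.1 z.1.2.2 z.2
          + P (List.ofFn z.1.1 ++ [z.1.2.1, z.1.2.2]) * rd z.1.2.1 z.1.2.2 z.2) :=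
        ENNReal.tsum_le_tsum hptF
    _ = ∑' x : (Fin j → ℕ) × ℕ × ℕ, ∑' y : ℕ,
        (((P (List.ofFn x.1 ++ [x.2.1, x.2.2]) - Q (List.ofFn x.1 ++ [x.2.1, x.2.2]))
          + (Q (List.ofFn x.1 ++ [x.2.1, x.2.2]) - P (List.ofFn x.1 ++ [x.2.1, x.2.2])))
            * KEgen S2 x.2.1 x.2.2 y
          + P (List.ofFn x.1 ++ [x.2.1, x.2.2]) * rd x.2.1 x.2.2 y) := ENNReal.tsum_prod'
    _ = ∑' x : (Fin j → ℕ) × ℕ × ℕ,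
        (((P (List.ofFn x.1 ++ [x.2.1, x.2.2]) - Q (List.ofFn x.1 ++ [x.2.1, x.2.2]))
          + (Q (List.ofFn x.1 ++ [x.2.1, x.2.2]) - P (List.ofFn x.1 ++ [x.2.1, x.2.2])))
          + P (List.ofFn x.1 ++ [x.2.1, x.2.2]) * ∑' y, rd x.2.1 x.2.2 y) := by
        congr 1; funext x; exact hinner x
    _ = Bsum μ ν j + ∑' x : (Fin j → ℕ) × ℕ × ℕ,
          P (List.ofFn x.1 ++ [x.2.1, x.2.2]) * ∑' y, rd x.2.1 x.2.2 y := ENNReal.tsum_add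
    _ ≤ Bsum μ ν j + piE μ star := add_le_add_right htail _

end BlockStep


-- ################ Section H: assembling block bounds ################

def e2E (M : ℕ) : ((Fin M → ℕ) × ℕ × ℕ) ≃ (Fin (M + 2) → ℕ) where
  toFun x := Fin.snoc (Fin.snoc x.1 x.2.1) x.2.2
  invFun w := (Fin.init (Fin.init w), Fin.init w (Fin.last M), w (Fin.last (M + 1)))
  left_inv := by
    rintro ⟨v, a, b⟩
    simp [Fin.init_snoc, Fin.snoc_last]
  right_inv := by
    intro w
    simp [Fin.snoc_init_self]

lemma word_e2E {M : ℕ} (x : (Fin M → ℕ) × ℕ × ℕ) :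
    List.ofFn (e2E M x) = List.ofFn x.1 ++ [x.2.1, x.2.2] := by
  obtain ⟨v, a, b⟩ := x
  show List.ofFn (Fin.snoc (Fin.snoc v a) b) = _
  rw [ofFn_snoc', ofFn_snoc']
  simp [List.append_assoc]

section Assemble

variable (μ ν : Measure (ℤ → ℕ)) [IsProbabilityMeasure μ] [IsProbabilityMeasure ν]
variable (S1 S2 : ℕ → ℕ → Prop) (star : ℕ × ℕ)

noncomputable def blockSum (μ ν : Measure (ℤ → ℕ)) (N : ℕ) : ℝ≥0∞ :=
  ∑' f : Fin (N + 1) → ℕ,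
    ((μ (cyl (proc ℕ) 0 (List.ofFn f)) - ν (cyl (proc ℕ) 0 (List.ofFn f))) +
      (ν (cyl (proc ℕ) 0 (List.ofFn f)) - μ (cyl (proc ℕ) 0 (List.ofFn f))))

lemma blockSum_eq_Bsum (M : ℕ) : blockSum μ ν (M + 1) = Bsum μ ν M := by
  unfold blockSum Bsum
  rw [← Equiv.tsum_eq (e2E M) (fun f : Fin (M + 2) → ℕ =>
    ((μ (cyl (proc ℕ) 0 (List.ofFn f)) - ν (cyl (proc ℕ) 0 (List.ofFn f))) +
      (ν (cyl (proc ℕ) 0 (List.ofFn f)) - μ (cyl (proc ℕ) 0 (List.ofFn f)))))]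
  congr 1; funext x
  rw [word_e2E x]

lemma Bsum_zero_eq : Bsum μ ν 0 = dE (piE μ) (piE ν) := by
  unfold Bsum dE
  haveI : Unique (Fin 0 → ℕ) :=
    ⟨⟨fun i => i.elim0⟩, fun v => funext fun i => i.elim0⟩
  rw [← Equiv.tsum_eq (Equiv.uniqueProd (ℕ × ℕ) (Fin 0 → ℕ))]
  refine tsum_congr fun x => ?_
  have hw : List.ofFn x.1 ++ [x.2.1, x.2.2] = [x.2.1, x.2.2] := by
    rw [List.ofFn_zero, List.nil_append]
  rw [hw]
  rfl

lemma blockSum_zero_le : blockSum μ ν 0 ≤ dE (piE μ) (piE ν) := by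
  unfold blockSum
  haveI : Unique (Fin 1) := ⟨⟨0⟩, fun i => Subsingleton.elim i 0⟩
  rw [← Equiv.tsum_eq (Equiv.funUnique (Fin 1) ℕ).symm]
  have hw : ∀ b : ℕ, List.ofFn ((Equiv.funUnique (Fin 1) ℕ).symm b) = [b] := by
    intro b
    simp [List.ofFn_succ]
  have hsplit : ∀ b : ℕ,
      ((μ (cyl (proc ℕ) 0 [b]) - ν (cyl (proc ℕ) 0 [b])) +
        (ν (cyl (proc ℕ) 0 [b]) - μ (cyl (proc ℕ) 0 [b])))
        ≤ ∑' a : ℕ, ((μ (cyl (proc ℕ) 0 [a, b]) - ν (cyl (proc ℕ) 0 [a, b])) +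
            (ν (cyl (proc ℕ) 0 [a, b]) - μ (cyl (proc ℕ) 0 [a, b]))) := by
    intro b
    rw [enn_sum_left μ [b], enn_sum_left ν [b]]
    calc ((∑' a, μ (cyl (proc ℕ) 0 (a :: [b]))) - ∑' a, ν (cyl (proc ℕ) 0 (a :: [b]))) +
          ((∑' a, ν (cyl (proc ℕ) 0 (a :: [b]))) - ∑' a, μ (cyl (proc ℕ) 0 (a :: [b])))
        ≤ (∑' a, (μ (cyl (proc ℕ) 0 (a :: [b])) - ν (cyl (proc ℕ) 0 (a :: [b])))) +
          ∑' a, (ν (cyl (proc ℕ) 0 (a :: [b])) - μ (cyl (proc ℕ) 0 (a :: [b]))) :=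
          add_le_add en_tsum_sub_le en_tsum_sub_le
      _ = ∑' a, ((μ (cyl (proc ℕ) 0 (a :: [b])) - ν (cyl (proc ℕ) 0 (a :: [b]))) +
            (ν (cyl (proc ℕ) 0 (a :: [b])) - μ (cyl (proc ℕ) 0 (a :: [b])))) :=
          ENNReal.tsum_add.symm
  calc (∑' b : ℕ,
        ((μ (cyl (proc ℕ) 0 (List.ofFn ((Equiv.funUnique (Fin 1) ℕ).symm b)))
            - ν (cyl (proc ℕ) 0 (List.ofFn ((Equiv.funUnique (Fin 1) ℕ).symm b)))) +
          (ν (cyl (proc ℕ) 0 (List.ofFn ((Equiv.funUnique (Fin 1) ℕ).symm b)))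
            - μ (cyl (proc ℕ) 0 (List.ofFn ((Equiv.funUnique (Fin 1) ℕ).symm b))))))
      = ∑' b : ℕ, ((μ (cyl (proc ℕ) 0 [b]) - ν (cyl (proc ℕ) 0 [b])) +
          (ν (cyl (proc ℕ) 0 [b]) - μ (cyl (proc ℕ) 0 [b]))) :=
        tsum_congr fun b => by rw [hw b]
    _ ≤ ∑' (b : ℕ) (a : ℕ), ((μ (cyl (proc ℕ) 0 [a, b]) - ν (cyl (proc ℕ) 0 [a, b])) +
          (ν (cyl (proc ℕ) 0 [a, b]) - μ (cyl (proc ℕ) 0 [a, b]))) :=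
        ENNReal.tsum_le_tsum hsplit
    _ = ∑' (a : ℕ) (b : ℕ), ((μ (cyl (proc ℕ) 0 [a, b]) - ν (cyl (proc ℕ) 0 [a, b])) +
          (ν (cyl (proc ℕ) 0 [a, b]) - μ (cyl (proc ℕ) 0 [a, b]))) := ENNReal.tsum_comm
    _ = dE (piE μ) (piE ν) := by
        unfold dE piE
        exact (ENNReal.tsum_prod' (f := fun p : ℕ × ℕ =>
          ((μ (cyl (proc ℕ) 0 [p.1, p.2]) - ν (cyl (proc ℕ) 0 [p.1, p.2])) +
            (ν (cyl (proc ℕ) 0 [p.1, p.2]) - μ (cyl (proc ℕ) 0 [p.1, p.2]))))).symm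

lemma blockSum_le
    (hstatμ : MeasurePreserving (shift ℕ) μ μ) (hstatν : MeasurePreserving (shift ℕ) ν ν)
    (hmkμ : MarkovOfOrder μ 2) (hmkν : MarkovOfOrder ν 2)
    (htrμ : ∀ a b u : ℕ, 0 < wordProb μ (proc ℕ) [a, b] →
      condProb μ (proc ℕ) u [a, b] = KgenX S1 a b u)
    (htrν : ∀ a b u : ℕ, 0 < wordProb ν (proc ℕ) [a, b] →
      condProb ν (proc ℕ) u [a, b] = KgenX S2 a b u)
    (hag : ∀ a b : ℕ, (a, b) ≠ star → (S1 a b ↔ S2 a b)) (N : ℕ) :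
    blockSum μ ν N ≤ (32 + ((N : ℕ) : ℝ≥0∞)) * piE μ star := by
  have hpair : dE (piE μ) (piE ν) ≤ 32 * piE μ star := by
    refine pair_bound (KEgen S1) (KEgen S2) (KEgen_row S2) (KEgen_min S2) star
      (fun a b h c => KEgen_agree (hag a b h) c) KEgen_diff (piE μ) (piE ν)
      (piE_stat μ hstatμ hmkμ S1 htrμ) (piE_stat ν hstatν hmkν S2 htrν)
      (piE_mass μ hstatμ) (piE_mass ν hstatν)
  have hB : ∀ m : ℕ, Bsum μ ν m ≤ dE (piE μ) (piE ν) + (m : ℝ≥0∞) * piE μ star := by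
    intro m
    induction m with
    | zero => rw [Bsum_zero_eq]; simp
    | succ m ih =>
        calc Bsum μ ν (m + 1) ≤ Bsum μ ν m + piE μ star :=
              Bsum_step μ ν S1 S2 star hstatμ hstatν hmkμ hmkν htrμ htrν hag m
          _ ≤ (dE (piE μ) (piE ν) + (m : ℝ≥0∞) * piE μ star) + piE μ star :=
              add_le_add_left ih _
          _ = dE (piE μ) (piE ν) + ((m : ℝ≥0∞) + 1) * piE μ star := by ring
          _ = dE (piE μ) (piE ν) + ((m + 1 : ℕ) : ℝ≥0∞) * piE μ star := by
              push_cast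
              ring
  cases N with
  | zero =>
      calc blockSum μ ν 0 ≤ dE (piE μ) (piE ν) := blockSum_zero_le μ ν
        _ ≤ 32 * piE μ star := hpair
        _ ≤ (32 + ((0 : ℕ) : ℝ≥0∞)) * piE μ star := by simp
  | succ M =>
      calc blockSum μ ν (M + 1) = Bsum μ ν M := blockSum_eq_Bsum μ ν M
        _ ≤ dE (piE μ) (piE ν) + (M : ℝ≥0∞) * piE μ star := hB M
        _ ≤ 32 * piE μ star + (M : ℝ≥0∞) * piE μ star := add_le_add_left hpair _
        _ = (32 + (M : ℝ≥0∞)) * piE μ star := by ring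
        _ ≤ (32 + ((M + 1 : ℕ) : ℝ≥0∞)) * piE μ star := by
            have hmc : ((M : ℝ≥0∞)) ≤ ((M + 1 : ℕ) : ℝ≥0∞) := by
              exact_mod_cast Nat.le_succ M
            exact mul_le_mul_left (add_le_add_right hmc 32) _

end Assemble


-- ################ Section I: final ################

lemma block_cyl (N : ℕ) (f : Fin (N + 1) → ℕ) :
    (fun ω : ℤ → ℕ => fun m : Fin (N + 1) => ω ((m : ℕ) : ℤ)) ⁻¹' {f}
      = cyl (proc ℕ) (N : ℤ) (List.ofFn f) := by
  ext ω
  simp only [Set.mem_preimage, Set.mem_singleton_iff, funext_iff, mem_cyl_iff,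
    List.length_ofFn]
  constructor
  · intro h i hi
    rw [List.getElem_ofFn]
    have h2 := h ⟨i, hi⟩
    rw [← h2]
    congr 1
    push_cast
    ring
  · intro h m
    have h2 := h (m : ℕ) m.isLt
    rw [List.getElem_ofFn] at h2
    have h3 : (⟨(m : ℕ), m.isLt⟩ : Fin (N + 1)) = m := rfl
    rw [h3] at h2
    rw [← h2]
    congr 1
    push_cast
    ring

lemma abs_toReal_le {x y : ℝ≥0∞} (hx : x ≠ ⊤) (hy : y ≠ ⊤) :
    |x.toReal - y.toReal| ≤ ((x - y) + (y - x)).toReal := by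
  rcases le_total x y with h | h
  · rw [tsub_eq_zero_of_le h, zero_add, ENNReal.toReal_sub_of_le h hy,
      abs_of_nonpos (by linarith [ENNReal.toReal_mono hy h])]
    linarith
  · rw [tsub_eq_zero_of_le h, add_zero, ENNReal.toReal_sub_of_le h hx,
      abs_of_nonneg (by linarith [ENNReal.toReal_mono hx h])]

/-- if `t_{k+1}` is so large that the stationary probability of the state
`t_{k+1}` under `Y^{(k)}` is below `δ/(64+2N)`, then the laws of
`(Y^{(k)}_0,…,Y^{(k)}_N)` and `(Y^{(k+1)}_0,…,Y^{(k+1)}_N)` are within total variation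
distance `δ`. -/
theorem perturbed_chain_tv_close
    (t : ℕ → ℕ) (k N : ℕ) (δ : ℝ) (hδ : 0 < δ)
    (μ ν : Measure (ℤ → ℕ)) [IsProbabilityMeasure μ] [IsProbabilityMeasure ν]
    (hergμ : Ergodic (shift ℕ) μ) (hergν : Ergodic (shift ℕ) ν)
    (hmkμ : MarkovOfOrder μ 2) (hmkν : MarkovOfOrder ν 2)
    (htransμ : ∀ a b u : ℕ, 0 < wordProb μ (proc ℕ) [a, b] →
      condProb μ (proc ℕ) u [a, b] =
        if ∃ j ≤ k, a = t j ∧ b = j then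
          (if u = b then Ptrans b (b + 1) else if u = b + 1 then Ptrans b b else Ptrans b u)
        else Ptrans b u)
    (htransν : ∀ a b u : ℕ, 0 < wordProb ν (proc ℕ) [a, b] →
      condProb ν (proc ℕ) u [a, b] =
        if ∃ j ≤ k + 1, a = t j ∧ b = j then
          (if u = b then Ptrans b (b + 1) else if u = b + 1 then Ptrans b b else Ptrans b u)
        else Ptrans b u)
    (hsmall : (μ {ω | ω 0 = t (k + 1)}).toReal < δ / (64 + 2 * N)) :
    ∀ A : Set (Fin (N + 1) → ℕ), MeasurableSet A →
      |(μ.map (fun ω (m : Fin (N + 1)) => ω ((m : ℕ) : ℤ)) A).toReal -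
          (ν.map (fun ω (m : Fin (N + 1)) => ω ((m : ℕ) : ℤ)) A).toReal| ≤ δ := by
  classical
  intro A hA
  set S1 : ℕ → ℕ → Prop := fun a b => ∃ j ≤ k, a = t j ∧ b = j with hS1
  set S2 : ℕ → ℕ → Prop := fun a b => ∃ j ≤ k + 1, a = t j ∧ b = j with hS2
  set star : ℕ × ℕ := (t (k + 1), k + 1) with hstar
  have hstatμ : MeasurePreserving (shift ℕ) μ μ := hergμ.toMeasurePreserving
  have hstatν : MeasurePreserving (shift ℕ) ν ν := hergν.toMeasurePreserving
  have htrμ' : ∀ a b u : ℕ, 0 < wordProb μ (proc ℕ) [a, b] →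
      condProb μ (proc ℕ) u [a, b] = KgenX S1 a b u := by
    intro a b u h
    rw [htransμ a b u h]
    unfold KgenX rowSwapX
    by_cases hs : S1 a b
    · rw [if_pos hs, if_pos hs]
    · rw [if_neg hs, if_neg hs]
  have htrν' : ∀ a b u : ℕ, 0 < wordProb ν (proc ℕ) [a, b] →
      condProb ν (proc ℕ) u [a, b] = KgenX S2 a b u := by
    intro a b u h
    rw [htransν a b u h]
    unfold KgenX rowSwapX
    by_cases hs : S2 a b
    · rw [if_pos hs, if_pos hs]
    · rw [if_neg hs, if_neg hs]
  have hagree : ∀ a b : ℕ, (a, b) ≠ star → (S1 a b ↔ S2 a b) := by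
    intro a b hne
    constructor
    · rintro ⟨j, hj, ha, hb⟩
      exact ⟨j, by omega, ha, hb⟩
    · rintro ⟨j, hj, ha, hb⟩
      rcases Nat.lt_or_ge j (k + 1) with hlt | hge
      · exact ⟨j, by omega, ha, hb⟩
      · exfalso
        apply hne
        have hj1 : j = k + 1 := by omega
        subst hj1
        rw [hstar, ha, hb]
  set F : (ℤ → ℕ) → (Fin (N + 1) → ℕ) :=
    fun ω => fun m : Fin (N + 1) => ω ((m : ℕ) : ℤ) with hFdef
  have hF : Measurable F := measurable_pi_lambda _ fun m => measurable_pi_apply _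
  rw [Measure.map_apply hF hA, Measure.map_apply hF hA]
  have hunion : F ⁻¹' A = ⋃ f ∈ A, F ⁻¹' {f} := by
    ext ω
    simp
  have hmeasf : ∀ f : Fin (N + 1) → ℕ, MeasurableSet (F ⁻¹' {f}) := by
    intro f
    rw [hFdef, block_cyl]
    exact measurableSet_cyl _ _
  have hdisj : A.PairwiseDisjoint (fun f : Fin (N + 1) → ℕ => F ⁻¹' {f}) := by
    intro f _ g _ hfg
    refine Set.disjoint_left.mpr ?_
    rintro ω h1 h2
    simp only [Set.mem_preimage, Set.mem_singleton_iff] at h1 h2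
    exact hfg (h1.symm.trans h2)
  have hμA : μ (F ⁻¹' A) = ∑' f : A, μ (F ⁻¹' {(f : Fin (N + 1) → ℕ)}) := by
    rw [hunion, measure_biUnion (Set.to_countable A) hdisj fun f _ => hmeasf f]
  have hνA : ν (F ⁻¹' A) = ∑' f : A, ν (F ⁻¹' {(f : Fin (N + 1) → ℕ)}) := by
    rw [hunion, measure_biUnion (Set.to_countable A) hdisj fun f _ => hmeasf f]
  have hcylμ : ∀ f : Fin (N + 1) → ℕ, μ (F ⁻¹' {f}) = μ (cyl (proc ℕ) 0 (List.ofFn f)) := by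
    intro f
    rw [hFdef, block_cyl, stat μ hstatμ]
  have hcylν : ∀ f : Fin (N + 1) → ℕ, ν (F ⁻¹' {f}) = ν (cyl (proc ℕ) 0 (List.ofFn f)) := by
    intro f
    rw [hFdef, block_cyl, stat ν hstatν]
  set ε : ℝ≥0∞ := μ {ω : ℤ → ℕ | ω 0 = t (k + 1)} with hε
  -- key distance bound
  have hdd : (μ (F ⁻¹' A) - ν (F ⁻¹' A)) + (ν (F ⁻¹' A) - μ (F ⁻¹' A))
      ≤ blockSum μ ν N := by
    rw [hμA, hνA]
    set g : (Fin (N + 1) → ℕ) → ℝ≥0∞ := fun f =>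
      ((μ (cyl (proc ℕ) 0 (List.ofFn f)) - ν (cyl (proc ℕ) 0 (List.ofFn f))) +
        (ν (cyl (proc ℕ) 0 (List.ofFn f)) - μ (cyl (proc ℕ) 0 (List.ofFn f)))) with hg
    have step1 : ((∑' f : A, μ (F ⁻¹' {(f : Fin (N + 1) → ℕ)}))
          - ∑' f : A, ν (F ⁻¹' {(f : Fin (N + 1) → ℕ)})) +
        ((∑' f : A, ν (F ⁻¹' {(f : Fin (N + 1) → ℕ)}))
          - ∑' f : A, μ (F ⁻¹' {(f : Fin (N + 1) → ℕ)}))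
        ≤ ∑' f : A, g (f : Fin (N + 1) → ℕ) := by
      calc ((∑' f : A, μ (F ⁻¹' {(f : Fin (N + 1) → ℕ)}))
            - ∑' f : A, ν (F ⁻¹' {(f : Fin (N + 1) → ℕ)})) +
          ((∑' f : A, ν (F ⁻¹' {(f : Fin (N + 1) → ℕ)}))
            - ∑' f : A, μ (F ⁻¹' {(f : Fin (N + 1) → ℕ)}))
          ≤ (∑' f : A, (μ (F ⁻¹' {(f : Fin (N + 1) → ℕ)})
                - ν (F ⁻¹' {(f : Fin (N + 1) → ℕ)}))) +
            ∑' f : A, (ν (F ⁻¹' {(f : Fin (N + 1) → ℕ)})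
                - μ (F ⁻¹' {(f : Fin (N + 1) → ℕ)})) :=
            add_le_add en_tsum_sub_le en_tsum_sub_le
        _ = ∑' f : A, ((μ (F ⁻¹' {(f : Fin (N + 1) → ℕ)})
                - ν (F ⁻¹' {(f : Fin (N + 1) → ℕ)})) +
              (ν (F ⁻¹' {(f : Fin (N + 1) → ℕ)})
                - μ (F ⁻¹' {(f : Fin (N + 1) → ℕ)}))) := ENNReal.tsum_add.symm
        _ = ∑' f : A, g (f : Fin (N + 1) → ℕ) := by
            refine tsum_congr fun f => ?_
            rw [hg]
            simp only
            rw [hcylμ, hcylν]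
    have step2 : (∑' f : A, g (f : Fin (N + 1) → ℕ)) ≤ ∑' f, g f := by
      rw [tsum_subtype]
      exact ENNReal.tsum_le_tsum fun f => Set.indicator_le_self' (fun _ _ => zero_le) f
    exact le_trans step1 (le_trans step2 (le_of_eq rfl))
  have hblock := blockSum_le μ ν S1 S2 star hstatμ hstatν hmkμ hmkν htrμ' htrν' hagree N
  have hsmallE : piE μ star ≤ ε := by
    rw [hε, hstar]
    exact piE_small μ hstatμ _ _
  have htotal : (μ (F ⁻¹' A) - ν (F ⁻¹' A)) + (ν (F ⁻¹' A) - μ (F ⁻¹' A))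
      ≤ (32 + ((N : ℕ) : ℝ≥0∞)) * ε := by
    calc (μ (F ⁻¹' A) - ν (F ⁻¹' A)) + (ν (F ⁻¹' A) - μ (F ⁻¹' A))
        ≤ blockSum μ ν N := hdd
      _ ≤ (32 + ((N : ℕ) : ℝ≥0∞)) * piE μ star := hblock
      _ ≤ (32 + ((N : ℕ) : ℝ≥0∞)) * ε := mul_le_mul_right hsmallE _
  -- convert to reals
  have hμfin : μ (F ⁻¹' A) ≠ ⊤ := (measure_lt_top μ _).ne
  have hνfin : ν (F ⁻¹' A) ≠ ⊤ := (measure_lt_top ν _).ne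
  have hεfin : ε ≠ ⊤ := (measure_lt_top μ _).ne
  have hcoef_fin : (32 + ((N : ℕ) : ℝ≥0∞)) ≠ ⊤ := by
    refine ENNReal.add_ne_top.mpr ⟨by simp, ?_⟩
    exact ENNReal.natCast_ne_top N
  have hrhs_fin : (32 + ((N : ℕ) : ℝ≥0∞)) * ε ≠ ⊤ := ENNReal.mul_ne_top hcoef_fin hεfin
  have habs : |(μ (F ⁻¹' A)).toReal - (ν (F ⁻¹' A)).toReal|
      ≤ ((32 + ((N : ℕ) : ℝ≥0∞)) * ε).toReal := by
    refine le_trans (abs_toReal_le hμfin hνfin) ?_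
    exact ENNReal.toReal_mono hrhs_fin htotal
  have hcoefR : ((32 + ((N : ℕ) : ℝ≥0∞)) * ε).toReal = (32 + (N : ℝ)) * ε.toReal := by
    rw [ENNReal.toReal_mul, ENNReal.toReal_add (by simp) (ENNReal.natCast_ne_top N),
      ENNReal.toReal_ofNat, ENNReal.toReal_natCast]
  have hεnn : 0 ≤ ε.toReal := ENNReal.toReal_nonneg
  have hden : (0 : ℝ) < 64 + 2 * N := by positivity
  have hfinal : (32 + (N : ℝ)) * ε.toReal ≤ δ := by
    have h1 : (32 + (N : ℝ)) * ε.toReal ≤ (64 + 2 * N) * ε.toReal := by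
      apply mul_le_mul_of_nonneg_right _ hεnn
      have : (0 : ℝ) ≤ (N : ℝ) := Nat.cast_nonneg N
      linarith
    have h2 : (64 + 2 * (N : ℝ)) * ε.toReal < (64 + 2 * N) * (δ / (64 + 2 * N)) := by
      apply mul_lt_mul_of_pos_left _ hden
      exact hsmall
    have h3 : (64 + 2 * (N : ℝ)) * (δ / (64 + 2 * N)) = δ := by
      field_simp
    linarith
  calc |(μ (F ⁻¹' A)).toReal - (ν (F ⁻¹' A)).toReal|
      ≤ ((32 + ((N : ℕ) : ℝ≥0∞)) * ε).toReal := habs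
    _ = (32 + (N : ℝ)) * ε.toReal := hcoefR
    _ ≤ δ := hfinal


end MemoryEst
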